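/- arXiv:1501.04542 — 6 statements merged into one kernel-verified Lean document; each statement's English description precedes it below -/
import Mathlib

section
/- Let ζ₁,…,ζₙ be i.i.d. real random variables, S_i = ζ₁+⋯+ζ_i the random walk, and σ = max{i ≤ n : S_i ≤ 0} (with σ = 0 if the set is empty, assuming S_0 = 0 ≤ 0 so σ is well-defined). Define the time-reversed process Ŝ_i = S_σ − S_{σ−i} for 0 ≤ i ≤ σ. Then the process (Ŝ_i)_{0 ≤ i ≤ σ} has the same law as (S_i)_{0 ≤ i ≤ σ}. -/
open MeasureTheory ProbabilityTheory Finset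

namespace TimeRevAux

variable (n : ℕ)

/-- extend a vector in `Fin n → ℝ` to `ℕ → ℝ` by zero -/
def ext0 (x : Fin n → ℝ) (j : ℕ) : ℝ := if h : j < n then x ⟨j, h⟩ else 0

/-- partial sums -/
def psum (x : Fin n → ℝ) (i : ℕ) : ℝ := ∑ j ∈ Finset.range i, ext0 n x j

/-- last nonpositive time -/
noncomputable def tau (x : Fin n → ℝ) : ℕ := sSup {i | i ≤ n ∧ psum n x i ≤ 0}

lemma psum_zero (x : Fin n → ℝ) : psum n x 0 = 0 := by simp [psum]

lemma measurable_ext0 (j : ℕ) : Measurable (fun x : Fin n → ℝ => ext0 n x j) := by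
  unfold ext0
  by_cases h : j < n
  · simpa [h] using measurable_pi_apply (⟨j, h⟩ : Fin n)
  · simpa [h] using measurable_const

lemma measurable_psum (i : ℕ) : Measurable (fun x : Fin n → ℝ => psum n x i) := by
  unfold psum
  exact Finset.measurable_sum _ fun j _ => measurable_ext0 n j

lemma tau_set_nonempty (x : Fin n → ℝ) : {i | i ≤ n ∧ psum n x i ≤ 0}.Nonempty :=
  ⟨0, Nat.zero_le n, le_of_eq (psum_zero n x)⟩

lemma tau_set_bdd (x : Fin n → ℝ) : BddAbove {i | i ≤ n ∧ psum n x i ≤ 0} :=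
  ⟨n, fun _ hi => hi.1⟩

lemma tau_le (x : Fin n → ℝ) : tau n x ≤ n :=
  csSup_le (tau_set_nonempty n x) fun _ hi => hi.1

lemma psum_tau_nonpos (x : Fin n → ℝ) : psum n x (tau n x) ≤ 0 :=
  (Nat.sSup_mem (tau_set_nonempty n x) (tau_set_bdd n x)).2

lemma le_tau (x : Fin n → ℝ) {i : ℕ} (hi : i ≤ n) (h : psum n x i ≤ 0) : i ≤ tau n x :=
  le_csSup (tau_set_bdd n x) ⟨hi, h⟩

lemma tau_eq_iff (x : Fin n → ℝ) (k : ℕ) :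
    tau n x = k ↔ k ≤ n ∧ psum n x k ≤ 0 ∧ ∀ i, i ≤ n → psum n x i ≤ 0 → i ≤ k := by
  constructor
  · rintro rfl
    exact ⟨tau_le n x, psum_tau_nonpos n x, fun i hi h => le_tau n x hi h⟩
  · rintro ⟨hk, hle, hmax⟩
    refine le_antisymm ?_ (le_tau n x hk hle)
    exact csSup_le (tau_set_nonempty n x) fun i hi => hmax i hi.1 hi.2

lemma measurable_tau : Measurable (tau n) := by
  apply measurable_to_countable'
  intro k
  have : tau n ⁻¹' {k} =
      {x | k ≤ n} ∩ ({x | psum n x k ≤ 0} ∩ ⋂ i ∈ Set.Iic n, {x | psum n x i ≤ 0 → i ≤ k}) := by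
    ext x
    simp only [Set.mem_preimage, Set.mem_singleton_iff, tau_eq_iff, Set.mem_inter_iff,
      Set.mem_iInter, Set.mem_setOf_eq, Set.mem_Iic]
  rw [this]
  refine (MeasurableSet.const _).inter (MeasurableSet.inter ?_ ?_)
  · exact measurableSet_le (measurable_psum n k) measurable_const
  · refine MeasurableSet.biInter ((Set.finite_Iic n).countable) fun i _ => ?_
    by_cases h : i ≤ k
    · simp [h]
    · have : {x : Fin n → ℝ | psum n x i ≤ 0 → i ≤ k} = {x | 0 < psum n x i} := by
        ext x; simp only [Set.mem_setOf_eq]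
        constructor
        · intro hx; by_contra hc; exact h (hx (not_lt.1 hc))
        · intro hx h0; linarith
      rw [this]
      exact measurableSet_lt measurable_const (measurable_psum n i)

/-- the reversing permutation of `Fin n` for a time `k` -/
def pk (k : ℕ) (j : Fin n) : Fin n :=
  if h : (j : ℕ) < k ∧ k ≤ n then ⟨k - 1 - j, by omega⟩ else j

lemma pk_involutive (k : ℕ) : Function.Involutive (pk n k) := by
  intro j
  unfold pk
  by_cases h : (j : ℕ) < k ∧ k ≤ n
  · rw [dif_pos h]
    have h2 : (k - 1 - (j : ℕ)) < k ∧ k ≤ n := ⟨by omega, h.2⟩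
    rw [dif_pos h2]
    exact Fin.ext (by simp; omega)
  · rw [dif_neg h, dif_neg h]

lemma psum_rev_le (x : Fin n → ℝ) {k i : ℕ} (hk : k ≤ n) (hik : i ≤ k) :
    psum n (fun j => x (pk n k j)) i = psum n x k - psum n x (k - i) := by
  have h1 : ∀ j ∈ Finset.range i, ext0 n (fun j => x (pk n k j)) j = ext0 n x (k - 1 - j) := by
    intro j hj
    have hj' : j < i := Finset.mem_range.1 hj
    have hjk : j < k := lt_of_lt_of_le hj' hik
    have hjn : j < n := lt_of_lt_of_le hjk hk
    have hkn : k - 1 - j < n := by omega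
    have : pk n k ⟨j, hjn⟩ = ⟨k - 1 - j, hkn⟩ := by
      unfold pk; rw [dif_pos ⟨hjk, hk⟩]
    simp only [ext0, dif_pos hjn, dif_pos hkn, this]
  rw [show psum n (fun j => x (pk n k j)) i = ∑ j ∈ Finset.range i,
        ext0 n (fun j => x (pk n k j)) j from rfl,
    Finset.sum_congr rfl h1]
  have h2 : ∑ j ∈ Finset.range i, ext0 n x (k - 1 - j)
      = ∑ m ∈ Finset.Ico (k - i) k, ext0 n x m := by
    refine Finset.sum_nbij' (i := fun j => k - 1 - j) (j := fun m => k - 1 - m) ?_ ?_ ?_ ?_ ?_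
    · intro j hj; have := Finset.mem_range.1 hj
      rw [Finset.mem_Ico]; omega
    · intro m hm; have := Finset.mem_Ico.1 hm
      rw [Finset.mem_range]; omega
    · intro j hj; have := Finset.mem_range.1 hj; omega
    · intro m hm; have := Finset.mem_Ico.1 hm; omega
    · intro j hj; rfl
  rw [h2, Finset.sum_Ico_eq_sub _ (Nat.sub_le k i)]
  rfl

lemma psum_rev_ge (x : Fin n → ℝ) {k i : ℕ} (hk : k ≤ n) (hik : k ≤ i) :
    psum n (fun j => x (pk n k j)) i = psum n x i := by
  set y := fun j => x (pk n k j) with hy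
  have hyk : psum n y k = psum n x k := by
    have := psum_rev_le n x hk (le_refl k)
    simpa [Nat.sub_self, psum_zero] using this
  have hIco : ∀ j ∈ Finset.Ico k i, ext0 n y j = ext0 n x j := by
    intro j hj
    obtain ⟨hj1, _⟩ := Finset.mem_Ico.1 hj
    by_cases hjn : j < n
    · have : pk n k ⟨j, hjn⟩ = ⟨j, hjn⟩ := by
        unfold pk; rw [dif_neg (by simp; omega)]
      simp only [ext0, dif_pos hjn, hy, this]
    · simp only [ext0, dif_neg hjn]
  have e1 : ∑ j ∈ Finset.Ico k i, ext0 n y j = psum n y i - psum n y k :=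
    Finset.sum_Ico_eq_sub _ hik
  have e2 : ∑ j ∈ Finset.Ico k i, ext0 n x j = psum n x i - psum n x k :=
    Finset.sum_Ico_eq_sub _ hik
  rw [Finset.sum_congr rfl hIco, e2] at e1
  linarith

lemma tau_rev (x : Fin n → ℝ) {k : ℕ} (h : tau n x = k) :
    tau n (fun j => x (pk n k j)) = k := by
  obtain ⟨hk, hle, hmax⟩ := (tau_eq_iff n x k).1 h
  refine (tau_eq_iff n _ k).2 ⟨hk, ?_, ?_⟩
  · rw [psum_rev_le n x hk (le_refl k)]
    simpa [Nat.sub_self, psum_zero] using hle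
  · intro i hi hle'
    by_contra hc
    push_neg at hc
    rw [psum_rev_ge n x hk (le_of_lt hc)] at hle'
    exact absurd (hmax i hi hle') (by omega)

/-- the stopped walk functional -/
noncomputable def Ff (x : Fin n → ℝ) : ℕ × (ℕ → ℝ) :=
  (tau n x, fun i => psum n x (min i (tau n x)))

/-- the reversed stopped walk functional -/
noncomputable def Gf (x : Fin n → ℝ) : ℕ × (ℕ → ℝ) :=
  (tau n x, fun i => psum n x (tau n x) - psum n x (tau n x - min i (tau n x)))

lemma measurable_aux {g : ℕ → (Fin n → ℝ) → ℝ} (hg : ∀ k, Measurable (g k)) :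
    Measurable (fun x => g (tau n x) x) := by
  have hrw : ∀ x, g (tau n x) x
      = ∑ k ∈ Finset.range (n + 1), if tau n x = k then g k x else 0 := by
    intro x
    rw [Finset.sum_ite_eq (Finset.range (n+1)) (tau n x) (fun k => g k x),
      if_pos (Finset.mem_range.2 (Nat.lt_succ_of_le (tau_le n x)))]
  simp only [hrw]
  refine Finset.measurable_sum _ fun k _ => Measurable.ite ?_ (hg k) measurable_const
  exact (measurable_tau n) (MeasurableSet.singleton k)

lemma measurable_Ff : Measurable (Ff n) := by
  refine Measurable.prod ?_ ?_
  · exact measurable_tau n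
  · refine measurable_pi_lambda _ fun i => ?_
    exact measurable_aux n (fun k => measurable_psum n (min i k))

lemma measurable_Gf : Measurable (Gf n) := by
  refine Measurable.prod ?_ ?_
  · exact measurable_tau n
  · refine measurable_pi_lambda _ fun i => ?_
    exact measurable_aux n
      (fun k => (measurable_psum n k).sub (measurable_psum n (k - min i k)))

end TimeRevAux

open TimeRevAux

/-- the joint law of n iid variables is the product measure -/
lemma law_pi {Ω : Type*} [MeasurableSpace Ω] (μ : Measure Ω) [IsProbabilityMeasure μ]
    (n : ℕ) (ζ : ℕ → Ω → ℝ)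
    (hmeas : ∀ i, Measurable (ζ i))
    (hindep : ProbabilityTheory.iIndepFun ζ μ)
    (hident : ∀ i, μ.map (ζ i) = μ.map (ζ 0))
    (q : Fin n → ℕ) (hq : Function.Injective q) :
    μ.map (fun ω (i : Fin n) => ζ (q i) ω)
      = Measure.pi (fun _ : Fin n => μ.map (ζ 0)) := by
  haveI : IsProbabilityMeasure (μ.map (ζ 0)) :=
    Measure.isProbabilityMeasure_map (hmeas 0).aemeasurable
  have hvec : Measurable (fun ω (i : Fin n) => ζ (q i) ω) :=
    measurable_pi_lambda _ fun i => hmeas (q i)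
  refine (Measure.pi_eq fun s hs => ?_).symm
  rw [Measure.map_apply hvec (MeasurableSet.univ_pi hs)]
  classical
  set sets : ℕ → Set ℝ := Function.extend q s (fun _ => Set.univ) with hsets
  have hext : ∀ i : Fin n, sets (q i) = s i := fun i => hq.extend_apply _ _ i
  have hpre : (fun ω (i : Fin n) => ζ (q i) ω) ⁻¹' (Set.pi Set.univ s)
      = ⋂ k ∈ Finset.image q Finset.univ, ζ k ⁻¹' (sets k) := by
    ext ω
    simp only [Set.mem_preimage, Set.mem_pi, Set.mem_univ, forall_true_left,
      Set.mem_iInter, Finset.mem_image, Finset.mem_univ, true_and]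
    constructor
    · rintro h k ⟨i, rfl⟩
      rw [hext]; exact h i
    · intro h i
      have := h (q i) ⟨i, rfl⟩
      rwa [hext] at this
  rw [hpre, hindep.measure_inter_preimage_eq_mul _ ?_]
  · rw [Finset.prod_image (fun i _ j _ h => hq h)]
    refine Finset.prod_congr rfl fun i _ => ?_
    rw [hext, ← Measure.map_apply (hmeas (q i)) (hs i), hident (q i)]
  · intro k hk
    obtain ⟨i, _, rfl⟩ := Finset.mem_image.1 hk
    rw [hext]; exact hs i

/-- The time-reversed walk Ŝ_i = S_σ − S_{σ−i}, 0 ≤ i ≤ σ, has the same law as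
(S_i)_{0 ≤ i ≤ σ}.  Both stopped paths are encoded together with σ as elements
of ℕ × (ℕ → ℝ), the paths being frozen after time σ. -/
theorem stmt_0 {Ω : Type*} [MeasurableSpace Ω] (μ : Measure Ω) [IsProbabilityMeasure μ]
    (n : ℕ) (ζ : ℕ → Ω → ℝ)
    (hmeas : ∀ i, Measurable (ζ i))
    (hindep : ProbabilityTheory.iIndepFun ζ μ)
    (hident : ∀ i, μ.map (ζ i) = μ.map (ζ 0))
    (S : ℕ → Ω → ℝ) (hS : ∀ i ω, S i ω = ∑ j ∈ Finset.range i, ζ j ω)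
    (σ : Ω → ℕ) (hσ : ∀ ω, σ ω = sSup {i | i ≤ n ∧ S i ω ≤ 0}) :
    μ.map (fun ω => ((σ ω, fun i : ℕ => S (σ ω) ω - S (σ ω - min i (σ ω)) ω) : ℕ × (ℕ → ℝ)))
      = μ.map (fun ω => ((σ ω, fun i : ℕ => S (min i (σ ω)) ω) : ℕ × (ℕ → ℝ))) := by
  classical
  set m := μ.map (ζ 0) with hm
  haveI : IsProbabilityMeasure m := Measure.isProbabilityMeasure_map (hmeas 0).aemeasurable
  set ν : Measure (Fin n → ℝ) := Measure.pi (fun _ : Fin n => m) with hν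
  set vec : Ω → (Fin n → ℝ) := fun ω i => ζ i ω with hvecdef
  have hvec : Measurable vec := measurable_pi_lambda _ fun i => hmeas i
  -- pointwise identifications
  have hpsum : ∀ ω i, i ≤ n → psum n (vec ω) i = S i ω := by
    intro ω i hi
    rw [hS]
    refine Finset.sum_congr rfl fun j hj => ?_
    have hjn : j < n := lt_of_lt_of_le (Finset.mem_range.1 hj) hi
    simp [ext0, hjn, hvecdef]
  have hσtau : ∀ ω, σ ω = tau n (vec ω) := by
    intro ω
    rw [hσ]
    congr 1
    ext i
    simp only [Set.mem_setOf_eq]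
    constructor
    · rintro ⟨h1, h2⟩; exact ⟨h1, by rw [hpsum ω i h1]; exact h2⟩
    · rintro ⟨h1, h2⟩; exact ⟨h1, by rw [← hpsum ω i h1]; exact h2⟩
  -- rewrite both sides through vec
  have hGcomp : (fun ω => ((σ ω, fun i : ℕ => S (σ ω) ω - S (σ ω - min i (σ ω)) ω) : ℕ × (ℕ → ℝ)))
      = (Gf n) ∘ vec := by
    funext ω
    have h1 := hσtau ω
    have hle := tau_le n (vec ω)
    simp only [Function.comp_apply, Gf, Prod.mk.injEq]
    refine ⟨h1, ?_⟩
    funext i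
    rw [← h1, hpsum ω (σ ω) (h1 ▸ hle), hpsum ω (σ ω - min i (σ ω)) (by omega)]
  have hFcomp : (fun ω => ((σ ω, fun i : ℕ => S (min i (σ ω)) ω) : ℕ × (ℕ → ℝ)))
      = (Ff n) ∘ vec := by
    funext ω
    have h1 := hσtau ω
    have hle := tau_le n (vec ω)
    simp only [Function.comp_apply, Ff, Prod.mk.injEq]
    refine ⟨h1, ?_⟩
    funext i
    rw [← h1, hpsum ω (min i (σ ω)) (by omega)]
  have hlaw : μ.map vec = ν := by
    rw [hν, hm, hvecdef]
    exact law_pi μ n ζ hmeas hindep hident (fun i : Fin n => (i : ℕ)) Fin.val_injective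
  rw [hGcomp, hFcomp, ← Measure.map_map (measurable_Gf n) hvec,
    ← Measure.map_map (measurable_Ff n) hvec, hlaw]
  -- now prove ν.map (Gf n) = ν.map (Ff n)
  refine Measure.ext fun A hA => ?_
  rw [Measure.map_apply (measurable_Gf n) hA, Measure.map_apply (measurable_Ff n) hA]
  -- decomposition over values of tau
  have hdecomp : ∀ s : Set (Fin n → ℝ), MeasurableSet s →
      ν s = ∑ k ∈ Finset.range (n + 1), ν (s ∩ tau n ⁻¹' {k}) := by
    intro s hsm
    have hcover : s = ⋃ k ∈ Finset.range (n + 1), s ∩ tau n ⁻¹' {k} := by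
      ext x
      simp only [Set.mem_iUnion, Set.mem_inter_iff, Set.mem_preimage,
        Set.mem_singleton_iff, Finset.mem_range, exists_prop]
      constructor
      · intro hx
        exact ⟨tau n x, Nat.lt_succ_of_le (tau_le n x), hx, rfl⟩
      · rintro ⟨k, _, hx, _⟩; exact hx
    conv_lhs => rw [hcover]
    rw [measure_biUnion_finset ?_ ?_]
    · intro k _ l _ hkl
      refine Set.disjoint_left.2 fun x hx hx' => ?_
      exact hkl (hx.2.symm.trans hx'.2)
    · intro k _
      exact hsm.inter ((measurable_tau n) (MeasurableSet.singleton k))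
  rw [hdecomp _ ((measurable_Gf n) hA), hdecomp _ ((measurable_Ff n) hA)]
  refine Finset.sum_congr rfl fun k hk => ?_
  have hkn : k ≤ n := Nat.lt_succ_iff.1 (Finset.mem_range.1 hk)
  -- the reversal map
  set R : (Fin n → ℝ) → (Fin n → ℝ) := fun x j => x (pk n k j) with hR
  have hRinv : ∀ x, R (R x) = x := by
    intro x; funext j; simp only [hR, pk_involutive n k j]
  -- key set identity
  have hkey : Gf n ⁻¹' A ∩ tau n ⁻¹' {k} = R ⁻¹' (Ff n ⁻¹' A ∩ tau n ⁻¹' {k}) := by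
    have main : ∀ x, tau n x = k → (tau n (R x) = k ∧ Ff n (R x) = Gf n x) := by
      intro x hx
      have htR : tau n (R x) = k := tau_rev n x hx
      refine ⟨htR, ?_⟩
      simp only [Ff, Gf, htR, hx, Prod.mk.injEq, true_and]
      funext i
      exact psum_rev_le n x hkn (min_le_right i k)
    ext x
    simp only [Set.mem_inter_iff, Set.mem_preimage, Set.mem_singleton_iff]
    constructor
    · rintro ⟨hxa, hxk⟩
      obtain ⟨h1, h2⟩ := main x hxk
      exact ⟨h2 ▸ hxa, h1⟩
    · rintro ⟨hxa, hxk⟩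
      have hx' : tau n x = k := by
        have := (main (R x) hxk).1
        rwa [hRinv x] at this
      obtain ⟨_, h2⟩ := main x hx'
      exact ⟨h2 ▸ hxa, hx'⟩
  rw [hkey]
  -- measure preservation of R
  set e : Equiv.Perm (Fin n) := (pk_involutive n k).toPerm _ with he
  have hmp := measurePreserving_piCongrLeft (fun _ : Fin n => m) e
  have hcoe : ⇑(MeasurableEquiv.piCongrLeft (fun _ : Fin n => ℝ) e) = R := by
    funext x j
    have : e (pk n k j) = j := pk_involutive n k j
    conv_lhs => rw [← this]
    rw [MeasurableEquiv.piCongrLeft_apply_apply]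
  have hAm : MeasurableSet (Ff n ⁻¹' A ∩ tau n ⁻¹' {k}) :=
    ((measurable_Ff n) hA).inter ((measurable_tau n) (MeasurableSet.singleton k))
  rw [← hcoe]
  exact hmp.measure_preimage hAm.nullMeasurableSet
end

section
/- Let ζ₁,…,ζₙ be i.i.d. real random variables, S_i the random walk, σ = max{i ≤ n : S_i ≤ 0}. Define N⁻ = Σ_{i=1}^σ 1{S_i ≤ 0} and Ñ⁺ = Σ_{i=0}^{σ−1} 1{S_i ≥ S_σ}. Then N⁻ and Ñ⁺ have the same distribution. -/
open MeasureTheory ProbabilityTheory Finset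


open Finset

namespace SA2

variable (n : ℕ)

noncomputable def xe (x : Fin n → ℝ) (j : ℕ) : ℝ := if h : j < n then x ⟨j, h⟩ else 0

noncomputable def SS (x : Fin n → ℝ) (i : ℕ) : ℝ := ∑ j ∈ Finset.range i, xe n x j

noncomputable def sig (x : Fin n → ℝ) : ℕ := sSup {i | i ≤ n ∧ SS n x i ≤ 0}

noncomputable def F (x : Fin n → ℝ) : ℕ :=
  ∑ i ∈ Finset.Icc 1 (sig n x), if SS n x i ≤ 0 then 1 else 0

noncomputable def G (x : Fin n → ℝ) : ℕ :=
  ∑ i ∈ Finset.range (sig n x), if SS n x (sig n x) ≤ SS n x i then 1 else 0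

def pfun (k : ℕ) (j : Fin n) : Fin n :=
  if h : (j : ℕ) < k ∧ k ≤ n then ⟨k - 1 - j, by omega⟩ else j

lemma pfun_invol (k : ℕ) : Function.Involutive (pfun n k) := by
  intro j
  unfold pfun
  by_cases h : (j : ℕ) < k ∧ k ≤ n
  · rw [dif_pos h]
    have h2 : ((⟨k - 1 - (j : ℕ), by omega⟩ : Fin n) : ℕ) < k ∧ k ≤ n :=
      ⟨by simp; omega, h.2⟩
    rw [dif_pos h2]
    ext
    simp
    omega
  · rw [dif_neg h, dif_neg h]

def permE (k : ℕ) : Equiv.Perm (Fin n) := (pfun_invol n k).toPerm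

noncomputable def Rk (k : ℕ) (x : Fin n → ℝ) : Fin n → ℝ := x ∘ (permE n k)

lemma SS_zero (x : Fin n → ℝ) : SS n x 0 = 0 := by simp [SS]

lemma zero_mem_T (x : Fin n → ℝ) : 0 ∈ {i | i ≤ n ∧ SS n x i ≤ 0} :=
  ⟨Nat.zero_le n, le_of_eq (SS_zero n x)⟩

lemma bdd_T (x : Fin n → ℝ) : BddAbove {i | i ≤ n ∧ SS n x i ≤ 0} :=
  ⟨n, fun _ hi => hi.1⟩

lemma sig_mem (x : Fin n → ℝ) : sig n x ∈ {i | i ≤ n ∧ SS n x i ≤ 0} :=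
  Nat.sSup_mem ⟨0, zero_mem_T n x⟩ (bdd_T n x)

lemma sig_le (x : Fin n → ℝ) : sig n x ≤ n := (sig_mem n x).1

lemma SS_sig_nonpos (x : Fin n → ℝ) : SS n x (sig n x) ≤ 0 := (sig_mem n x).2

lemma SS_pos_of_gt (x : Fin n → ℝ) {i : ℕ} (h1 : sig n x < i) (h2 : i ≤ n) :
    0 < SS n x i := by
  by_contra h
  push_neg at h
  have : i ≤ sig n x := le_csSup (bdd_T n x) ⟨h2, h⟩
  omega

lemma sig_eq_of (x : Fin n → ℝ) {k : ℕ} (hk : k ≤ n) (h1 : SS n x k ≤ 0)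
    (h2 : ∀ i, k < i → i ≤ n → 0 < SS n x i) : sig n x = k := by
  refine le_antisymm ?_ (le_csSup (bdd_T n x) ⟨hk, h1⟩)
  refine csSup_le ⟨0, zero_mem_T n x⟩ fun i hi => ?_
  by_contra h
  push_neg at h
  have := h2 i h hi.1
  linarith [hi.2]

lemma sig_eq_iff (x : Fin n → ℝ) {k : ℕ} (hk : k ≤ n) :
    sig n x = k ↔ (SS n x k ≤ 0 ∧ ∀ i, k < i → i ≤ n → 0 < SS n x i) := by
  constructor
  · rintro rfl
    exact ⟨SS_sig_nonpos n x, fun i h1 h2 => SS_pos_of_gt n x h1 h2⟩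
  · rintro ⟨h1, h2⟩
    exact sig_eq_of n x hk h1 h2

lemma xe_Rk {k : ℕ} (hk : k ≤ n) (x : Fin n → ℝ) (j : ℕ) :
    xe n (Rk n k x) j = if j < k then xe n x (k - 1 - j) else xe n x j := by
  unfold Rk xe
  by_cases hjk : j < k
  · have hjn : j < n := lt_of_lt_of_le hjk hk
    simp only [hjk, if_true, dif_pos hjn]
    show x (pfun n k ⟨j, hjn⟩) = _
    unfold pfun
    have : ((⟨j, hjn⟩ : Fin n) : ℕ) < k ∧ k ≤ n := ⟨hjk, hk⟩
    rw [dif_pos this]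
    have hlt : k - 1 - j < n := by omega
    rw [dif_pos hlt]
  · simp only [hjk, if_false]
    by_cases hjn : j < n
    · simp only [dif_pos hjn]
      show x (pfun n k ⟨j, hjn⟩) = x ⟨j, hjn⟩
      unfold pfun
      rw [dif_neg (by simp; omega)]
    · simp only [dif_neg hjn]

lemma SS_Rk_le {k : ℕ} (hk : k ≤ n) (x : Fin n → ℝ) {i : ℕ} (hik : i ≤ k) :
    SS n (Rk n k x) i = SS n x k - SS n x (k - i) := by
  unfold SS
  have h1 : ∀ j ∈ Finset.range i, xe n (Rk n k x) j = xe n x (k - 1 - j) := by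
    intro j hj
    rw [Finset.mem_range] at hj
    rw [xe_Rk n hk]
    rw [if_pos (by omega)]
  rw [Finset.sum_congr rfl h1]
  have h2 : ∑ j ∈ Finset.range i, xe n x (k - 1 - j)
      = ∑ j ∈ Finset.range i, xe n x (k - i + j) := by
    refine Finset.sum_congr rfl (fun j hj => ?_) |>.trans
      (Finset.sum_range_reflect (fun j => xe n x (k - i + j)) i)
    rw [Finset.mem_range] at hj
    congr 1
    omega
  rw [h2]
  have h3 : ∑ j ∈ Finset.range i, xe n x (k - i + j)
      = ∑ j ∈ Finset.Ico (k - i) k, xe n x j := by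
    have hki : k - (k - i) = i := by omega
    rw [Finset.sum_Ico_eq_sum_range, hki]
  rw [h3, Finset.sum_Ico_eq_sub _ (Nat.sub_le k i)]

lemma SS_Rk_ge {k : ℕ} (hk : k ≤ n) (x : Fin n → ℝ) {i : ℕ} (hik : k ≤ i) :
    SS n (Rk n k x) i = SS n x i := by
  have hk0 : SS n (Rk n k x) k = SS n x k := by
    rw [SS_Rk_le n hk x (le_refl k)]
    simp [SS_zero]
  have e1 : SS n (Rk n k x) i
      = SS n (Rk n k x) k + ∑ j ∈ Finset.Ico k i, xe n (Rk n k x) j := by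
    simp only [SS, Finset.range_eq_Ico]
    exact (Finset.sum_Ico_consecutive _ (Nat.zero_le k) hik).symm
  have e2 : SS n x i
      = SS n x k + ∑ j ∈ Finset.Ico k i, xe n x j := by
    simp only [SS, Finset.range_eq_Ico]
    exact (Finset.sum_Ico_consecutive _ (Nat.zero_le k) hik).symm
  have e3 : ∑ j ∈ Finset.Ico k i, xe n (Rk n k x) j
      = ∑ j ∈ Finset.Ico k i, xe n x j := by
    refine Finset.sum_congr rfl fun j hj => ?_
    rw [Finset.mem_Ico] at hj
    rw [xe_Rk n hk, if_neg (by omega)]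
  rw [e1, e2, e3, hk0]

lemma Rk_invol (k : ℕ) (x : Fin n → ℝ) : Rk n k (Rk n k x) = x := by
  funext j
  show x (pfun n k (pfun n k j)) = x j
  rw [pfun_invol n k j]

lemma sig_Rk {k : ℕ} (hk : k ≤ n) (x : Fin n → ℝ) (hs : sig n x = k) :
    sig n (Rk n k x) = k := by
  refine sig_eq_of n _ hk ?_ ?_
  · rw [SS_Rk_le n hk x (le_refl k)]
    simp only [Nat.sub_self, SS_zero, sub_zero]
    rw [← hs]
    exact SS_sig_nonpos n x
  · intro i h1 h2
    rw [SS_Rk_ge n hk x (le_of_lt h1)]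
    exact SS_pos_of_gt n x (by omega) h2

lemma F_Rk {k : ℕ} (hk : k ≤ n) (x : Fin n → ℝ) (hs : sig n x = k) :
    F n (Rk n k x) = G n x := by
  subst hs
  set k := sig n x with hkdef
  unfold F G
  rw [sig_Rk n hk x rfl, ← hkdef]
  have h1 : ∀ i ∈ Finset.Icc 1 k,
      (if SS n (Rk n k x) i ≤ 0 then 1 else 0)
        = (if SS n x k ≤ SS n x (k - i) then 1 else 0) := by
    intro i hi
    rw [Finset.mem_Icc] at hi
    rw [SS_Rk_le n hk x hi.2]
    congr 1
    simp [sub_nonpos]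
  rw [Finset.sum_congr rfl h1]
  refine Finset.sum_nbij' (i := fun i => k - i) (j := fun j => k - j) ?_ ?_ ?_ ?_ ?_
  · intro a ha; rw [Finset.mem_Icc] at ha; simp only [Finset.mem_range]; omega
  · intro a ha; rw [Finset.mem_range] at ha; simp only [Finset.mem_Icc]; omega
  · intro a ha; rw [Finset.mem_Icc] at ha; show k - (k - a) = a; omega
  · intro a ha; rw [Finset.mem_range] at ha; show k - (k - a) = a; omega
  · intro a _; rfl

open MeasureTheory ProbabilityTheory

lemma measurable_xe (j : ℕ) : Measurable (fun x : Fin n → ℝ => xe n x j) := by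
  unfold xe
  split_ifs with h
  · exact measurable_pi_apply _
  · exact measurable_const

lemma measurable_SS (i : ℕ) : Measurable (fun x : Fin n → ℝ => SS n x i) := by
  unfold SS
  exact Finset.measurable_sum _ fun j _ => measurable_xe n j

lemma measurable_sig : Measurable (sig n) := by
  refine measurable_to_countable' fun k => ?_
  by_cases hk : k ≤ n
  · have : sig n ⁻¹' {k} = {x | SS n x k ≤ 0}
        ∩ ⋂ i ∈ Finset.Ioc k n, {x | 0 < SS n x i} := by
      ext x
      simp only [Set.mem_preimage, Set.mem_singleton_iff, Set.mem_inter_iff,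
        Set.mem_iInter, Set.mem_setOf_eq, Finset.mem_Ioc, sig_eq_iff n x hk]
      constructor
      · rintro ⟨h1, h2⟩
        exact ⟨h1, fun i hi => h2 i hi.1 hi.2⟩
      · rintro ⟨h1, h2⟩
        exact ⟨h1, fun i hi1 hi2 => h2 i ⟨hi1, hi2⟩⟩
    rw [this]
    refine MeasurableSet.inter (measurableSet_le (measurable_SS n k) measurable_const) ?_
    exact MeasurableSet.biInter (Finset.countable_toSet _)
      fun i _ => measurableSet_lt measurable_const (measurable_SS n i)
  · have : sig n ⁻¹' {k} = ∅ := by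
      ext x
      simp only [Set.mem_preimage, Set.mem_singleton_iff, Set.mem_empty_iff_false,
        iff_false]
      intro h
      exact hk (h ▸ sig_le n x)
    rw [this]
    exact MeasurableSet.empty

lemma measurable_SSsig : Measurable (fun x : Fin n → ℝ => SS n x (sig n x)) := by
  have heq : (fun x : Fin n → ℝ => SS n x (sig n x))
      = fun x => ∑ k ∈ Finset.range (n + 1), if sig n x = k then SS n x k else 0 := by
    funext x
    rw [Finset.sum_ite_eq (Finset.range (n + 1)) (sig n x) (fun k => SS n x k)]
    rw [if_pos (Finset.mem_range.2 (Nat.lt_succ_of_le (sig_le n x)))]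
  rw [heq]
  refine Finset.measurable_sum _ fun k _ => ?_
  exact Measurable.ite (measurable_sig n (measurableSet_singleton k))
    (measurable_SS n k) measurable_const

lemma measurable_F : Measurable (F n) := by
  have heq : F n = fun x => ∑ i ∈ Finset.Icc 1 n,
      if i ≤ sig n x ∧ SS n x i ≤ 0 then 1 else 0 := by
    funext x
    unfold F
    rw [show (∑ i ∈ Finset.Icc 1 (sig n x), if SS n x i ≤ 0 then 1 else 0)
        = ∑ i ∈ Finset.Icc 1 (sig n x), if i ≤ sig n x ∧ SS n x i ≤ 0 then 1 else 0 from
      Finset.sum_congr rfl fun i hi => by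
        rw [Finset.mem_Icc] at hi
        by_cases h : SS n x i ≤ 0 <;> simp [h, hi.2]]
    refine Finset.sum_subset (Finset.Icc_subset_Icc_right (sig_le n x)) fun i hi hni => ?_
    rw [Finset.mem_Icc] at hi
    rw [Finset.mem_Icc] at hni
    rw [if_neg]
    rintro ⟨h1, _⟩
    exact hni ⟨hi.1, h1⟩
  rw [heq]
  refine Finset.measurable_sum _ fun i _ => ?_
  refine Measurable.ite ?_ measurable_const measurable_const
  refine MeasurableSet.inter ?_ (measurableSet_le (measurable_SS n i) measurable_const)
  exact measurable_sig n (by trivial : MeasurableSet {m : ℕ | i ≤ m})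

lemma measurable_G : Measurable (G n) := by
  have heq : G n = fun x => ∑ i ∈ Finset.range n,
      if i < sig n x ∧ SS n x (sig n x) ≤ SS n x i then 1 else 0 := by
    funext x
    unfold G
    rw [show (∑ i ∈ Finset.range (sig n x), if SS n x (sig n x) ≤ SS n x i then 1 else 0)
        = ∑ i ∈ Finset.range (sig n x),
            if i < sig n x ∧ SS n x (sig n x) ≤ SS n x i then 1 else 0 from
      Finset.sum_congr rfl fun i hi => by
        rw [Finset.mem_range] at hi
        by_cases h : SS n x (sig n x) ≤ SS n x i <;> simp [h, hi]]
    refine Finset.sum_subset (Finset.range_subset_range.2 (sig_le n x)) fun i hi hni => ?_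
    rw [Finset.mem_range] at hni
    rw [if_neg]
    rintro ⟨h1, _⟩
    exact hni h1
  rw [heq]
  refine Finset.measurable_sum _ fun i _ => ?_
  refine Measurable.ite ?_ measurable_const measurable_const
  refine MeasurableSet.inter ?_ (measurableSet_le (measurable_SSsig n) (measurable_SS n i))
  exact measurable_sig n (by trivial : MeasurableSet {m : ℕ | i < m})

section Measure

variable {Ω : Type*} [MeasurableSpace Ω]

noncomputable def Vmap (ζ : ℕ → Ω → ℝ) (n : ℕ) : Ω → (Fin n → ℝ) := fun ω i => ζ i ω

lemma measurable_Vmap (ζ : ℕ → Ω → ℝ) (hm : ∀ i, Measurable (ζ i)) (n : ℕ) :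
    Measurable (Vmap ζ n) :=
  measurable_pi_lambda _ fun i => hm i

lemma box_formula (μ : Measure Ω) (ζ : ℕ → Ω → ℝ) (hm : ∀ i, Measurable (ζ i))
    (hindep : iIndepFun ζ μ)
    (hident : ∀ i, μ.map (ζ i) = μ.map (ζ 0)) (n : ℕ)
    (s : Fin n → Set ℝ) (hs : ∀ i, MeasurableSet (s i)) :
    (μ.map (Vmap ζ n)) (Set.pi Set.univ s) = ∏ i : Fin n, (μ.map (ζ 0)) (s i) := by
  rw [Measure.map_apply (measurable_Vmap ζ hm n) (MeasurableSet.univ_pi hs)]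
  set s' : ℕ → Set ℝ := fun j => if h : j < n then s ⟨j, h⟩ else Set.univ with hs'
  have hpre : Vmap ζ n ⁻¹' (Set.pi Set.univ s) = ⋂ j ∈ Finset.range n, ζ j ⁻¹' s' j := by
    ext ω
    simp only [Set.mem_preimage, Set.mem_pi, Set.mem_univ, forall_true_left,
      Set.mem_iInter, Finset.mem_range]
    constructor
    · intro h j hj
      simp only [hs', dif_pos hj]
      exact h ⟨j, hj⟩
    · intro h i
      have := h i.1 i.2
      simp only [hs', dif_pos i.2] at this
      simpa [Vmap] using this
  rw [hpre]
  have hmeas' : ∀ j, j ∈ Finset.range n → MeasurableSet (s' j) := by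
    intro j _
    simp only [hs']
    split_ifs with h
    · exact hs ⟨j, h⟩
    · exact MeasurableSet.univ
  rw [hindep.measure_inter_preimage_eq_mul (Finset.range n) hmeas']
  have heach : ∀ j, MeasurableSet (s' j) → μ (ζ j ⁻¹' s' j) = (μ.map (ζ 0)) (s' j) := by
    intro j hj
    rw [← hident j, Measure.map_apply (hm j) hj]
  rw [Finset.prod_congr rfl fun j hj => heach j (hmeas' j hj)]
  rw [← Fin.prod_univ_eq_prod_range (fun j => (μ.map (ζ 0)) (s' j)) n]
  refine Finset.prod_congr rfl fun i _ => ?_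
  congr 1
  simp only [hs', dif_pos i.2]

lemma nu_eq_pi (μ : Measure Ω) [IsProbabilityMeasure μ] (ζ : ℕ → Ω → ℝ)
    (hm : ∀ i, Measurable (ζ i))
    (hindep : iIndepFun ζ μ)
    (hident : ∀ i, μ.map (ζ i) = μ.map (ζ 0)) (n : ℕ) :
    μ.map (Vmap ζ n) = Measure.pi (fun _ : Fin n => μ.map (ζ 0)) := by
  have : IsProbabilityMeasure (μ.map (ζ 0)) :=
    Measure.isProbabilityMeasure_map (hm 0).aemeasurable
  exact (Measure.pi_eq fun s hs => box_formula μ ζ hm hindep hident n s hs).symm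

lemma nu_perm (μ : Measure Ω) [IsProbabilityMeasure μ] (ζ : ℕ → Ω → ℝ)
    (hm : ∀ i, Measurable (ζ i))
    (hindep : iIndepFun ζ μ)
    (hident : ∀ i, μ.map (ζ i) = μ.map (ζ 0)) (n : ℕ) (e : Equiv.Perm (Fin n)) :
    (μ.map (Vmap ζ n)).map (fun x : Fin n → ℝ => x ∘ e) = μ.map (Vmap ζ n) := by
  have : IsProbabilityMeasure (μ.map (ζ 0)) :=
    Measure.isProbabilityMeasure_map (hm 0).aemeasurable
  have hφ : Measurable (fun x : Fin n → ℝ => x ∘ e) :=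
    measurable_pi_lambda _ fun i => measurable_pi_apply (e i)
  rw [nu_eq_pi μ ζ hm hindep hident n]
  refine Eq.symm (Measure.pi_eq fun s hs => ?_)
  rw [Measure.map_apply hφ (MeasurableSet.univ_pi hs)]
  have hpre : (fun x : Fin n → ℝ => x ∘ e) ⁻¹' (Set.pi Set.univ s)
      = Set.pi Set.univ (fun i => s (e.symm i)) := by
    ext x
    simp only [Set.mem_preimage, Set.mem_pi, Set.mem_univ, forall_true_left,
      Function.comp_apply]
    constructor
    · intro h j
      have := h (e.symm j)
      simpa using this
    · intro h i
      have := h (e i)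
      simpa using this
  rw [hpre, Measure.pi_pi]
  exact Equiv.prod_comp e.symm fun i => (μ.map (ζ 0)) (s i)

end Measure

end SA2

open MeasureTheory ProbabilityTheory Finset

/-- Sparre-Andersen / last-passage: `N⁻ = Σ_{i=1}^σ 1{S_i ≤ 0}` and
`Ñ⁺ = Σ_{i=0}^{σ-1} 1{S_i ≥ S_σ}` have the same distribution. -/
theorem stmt_2 {Ω : Type*} [MeasurableSpace Ω] (μ : Measure Ω) [IsProbabilityMeasure μ]
    (n : ℕ) (ζ : ℕ → Ω → ℝ)
    (hmeas : ∀ i, Measurable (ζ i))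
    (hindep : iIndepFun ζ μ)
    (hident : ∀ i, μ.map (ζ i) = μ.map (ζ 0))
    (S : ℕ → Ω → ℝ) (hS : ∀ i ω, S i ω = ∑ j ∈ Finset.range i, ζ j ω)
    (σ : Ω → ℕ) (hσ : ∀ ω, σ ω = sSup {i | i ≤ n ∧ S i ω ≤ 0})
    (Nminus Ntildeplus : Ω → ℕ)
    (hNminus : ∀ ω, Nminus ω = ∑ i ∈ Finset.Icc 1 (σ ω), if S i ω ≤ 0 then 1 else 0)
    (hNtildeplus : ∀ ω, Ntildeplus ω =
      ∑ i ∈ Finset.range (σ ω), if S (σ ω) ω ≤ S i ω then 1 else 0) :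
    μ.map Nminus = μ.map Ntildeplus := by
  set V := SA2.Vmap ζ n with hV
  have hVm : Measurable V := SA2.measurable_Vmap ζ hmeas n
  -- partial sums agree up to n
  have hSeq : ∀ ω, ∀ i ≤ n, SA2.SS n (V ω) i = S i ω := by
    intro ω i hi
    rw [hS i ω]
    unfold SA2.SS
    refine Finset.sum_congr rfl fun j hj => ?_
    rw [Finset.mem_range] at hj
    have hjn : j < n := lt_of_lt_of_le hj hi
    unfold SA2.xe
    rw [dif_pos hjn]
    rfl
  -- sigma agrees
  have hsig : ∀ ω, SA2.sig n (V ω) = σ ω := by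
    intro ω
    rw [hσ ω]
    unfold SA2.sig
    congr 1
    ext i
    simp only [Set.mem_setOf_eq]
    constructor
    · rintro ⟨h1, h2⟩
      exact ⟨h1, by rwa [hSeq ω i h1] at h2⟩
    · rintro ⟨h1, h2⟩
      exact ⟨h1, by rwa [hSeq ω i h1]⟩
  have hσle : ∀ ω, σ ω ≤ n := fun ω => (hsig ω) ▸ SA2.sig_le n (V ω)
  -- identify Nminus and Ntildeplus with F ∘ V and G ∘ V
  have hNm : Nminus = SA2.F n ∘ V := by
    funext ω
    rw [hNminus ω]
    show _ = SA2.F n (V ω)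
    unfold SA2.F
    rw [hsig ω]
    refine Finset.sum_congr rfl fun i hi => ?_
    rw [Finset.mem_Icc] at hi
    rw [hSeq ω i (le_trans hi.2 (hσle ω))]
  have hNt : Ntildeplus = SA2.G n ∘ V := by
    funext ω
    rw [hNtildeplus ω]
    show _ = SA2.G n (V ω)
    unfold SA2.G
    rw [hsig ω]
    refine Finset.sum_congr rfl fun i hi => ?_
    rw [Finset.mem_range] at hi
    rw [hSeq ω i (le_of_lt (lt_of_lt_of_le hi (hσle ω))),
      hSeq ω (σ ω) (hσle ω)]
  rw [hNm, hNt, ← Measure.map_map (SA2.measurable_F n) hVm,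
    ← Measure.map_map (SA2.measurable_G n) hVm]
  set ν := μ.map V with hν
  -- partition lemma
  have hpart : ∀ A : Set (Fin n → ℝ), MeasurableSet A →
      ν A = ∑ k ∈ Finset.range (n + 1), ν ({x | SA2.sig n x = k} ∩ A) := by
    intro A hA
    have hcover : A = ⋃ k ∈ Finset.range (n + 1), ({x | SA2.sig n x = k} ∩ A) := by
      ext x
      simp only [Set.mem_iUnion, Set.mem_inter_iff, Set.mem_setOf_eq, Finset.mem_range]
      constructor
      · intro hx
        exact ⟨SA2.sig n x, Nat.lt_succ_of_le (SA2.sig_le n x), rfl, hx⟩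
      · rintro ⟨k, _, _, hx⟩
        exact hx
    have hdisj : Set.PairwiseDisjoint (↑(Finset.range (n + 1)))
        (fun k => {x | SA2.sig n x = k} ∩ A) := by
      intro a _ b _ hab
      refine Set.disjoint_left.2 fun x hxa hxb => hab ?_
      rw [← hxa.1, ← hxb.1]
    have hmeasb : ∀ k ∈ Finset.range (n + 1),
        MeasurableSet ({x | SA2.sig n x = k} ∩ A) := fun k _ =>
      (SA2.measurable_sig n (measurableSet_singleton k)).inter hA
    conv_lhs => rw [hcover]
    exact measure_biUnion_finset hdisj hmeasb
  refine Measure.ext fun t ht => ?_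
  rw [Measure.map_apply (SA2.measurable_F n) ht, Measure.map_apply (SA2.measurable_G n) ht]
  rw [hpart _ ((SA2.measurable_F n) ht), hpart _ ((SA2.measurable_G n) ht)]
  refine Finset.sum_congr rfl fun k hk => ?_
  rw [Finset.mem_range] at hk
  have hkn : k ≤ n := Nat.lt_succ_iff.1 hk
  have hφm : Measurable (fun x : Fin n → ℝ => x ∘ (SA2.permE n k)) :=
    measurable_pi_lambda _ fun i => measurable_pi_apply _
  have hB : MeasurableSet ({x | SA2.sig n x = k} ∩ SA2.F n ⁻¹' t) :=
    (SA2.measurable_sig n (measurableSet_singleton k)).inter ((SA2.measurable_F n) ht)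
  have key : {x | SA2.sig n x = k} ∩ SA2.G n ⁻¹' t
      = (fun x : Fin n → ℝ => x ∘ (SA2.permE n k)) ⁻¹'
        ({x | SA2.sig n x = k} ∩ SA2.F n ⁻¹' t) := by
    ext x
    have hRkx : (fun x : Fin n → ℝ => x ∘ (SA2.permE n k)) x = SA2.Rk n k x := rfl
    simp only [Set.mem_inter_iff, Set.mem_setOf_eq, Set.mem_preimage, hRkx]
    constructor
    · rintro ⟨h1, h2⟩
      refine ⟨SA2.sig_Rk n hkn x h1, ?_⟩
      rw [SA2.F_Rk n hkn x h1]
      exact h2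
    · rintro ⟨h1, h2⟩
      have hx : SA2.sig n x = k := by
        have := SA2.sig_Rk n hkn (SA2.Rk n k x) h1
        rwa [SA2.Rk_invol n k x] at this
      refine ⟨hx, ?_⟩
      rwa [SA2.F_Rk n hkn x hx] at h2
  rw [key, ← Measure.map_apply hφm hB,
    SA2.nu_perm μ ζ hmeas hindep hident n (SA2.permE n k)]
end

section
/- Let ζ₁,…,ζₙ be i.i.d. real random variables, S_i the random walk, σ = max{i ≤ n : S_i ≤ 0}. Define N⁺ = Σ_{i=1}^σ 1{S_i ≥ 0} and Ñ⁻ = Σ_{i=0}^{σ−1} 1{S_i ≤ S_σ}. Then N⁺ and Ñ⁻ have the same distribution. -/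
open MeasureTheory ProbabilityTheory Finset

noncomputable section Stmt3Aux

/-- extend a finite vector by 0 -/
def st3xe (n : ℕ) (x : Fin n → ℝ) (j : ℕ) : ℝ := if h : j < n then x ⟨j, h⟩ else 0

/-- partial sums -/
def st3S (n : ℕ) (x : Fin n → ℝ) (i : ℕ) : ℝ := ∑ j ∈ range i, st3xe n x j

/-- last nonpositive time -/
def st3sig (n : ℕ) (x : Fin n → ℝ) : ℕ := sSup {i | i ≤ n ∧ st3S n x i ≤ 0}

def st3np (n : ℕ) (x : Fin n → ℝ) : ℕ :=
  ∑ i ∈ Icc 1 (st3sig n x), if 0 ≤ st3S n x i then 1 else 0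

def st3nm (n : ℕ) (x : Fin n → ℝ) : ℕ :=
  ∑ i ∈ range (st3sig n x), if st3S n x i ≤ st3S n x (st3sig n x) then 1 else 0

lemma st3S_zero (n : ℕ) (x : Fin n → ℝ) : st3S n x 0 = 0 := by simp [st3S]

lemma st3set_mem (n : ℕ) (x : Fin n → ℝ) :
    st3sig n x ≤ n ∧ st3S n x (st3sig n x) ≤ 0 := by
  have h0 : (0 : ℕ) ∈ {i | i ≤ n ∧ st3S n x i ≤ 0} := by
    simp [st3S_zero]
  have hb : BddAbove {i | i ≤ n ∧ st3S n x i ≤ 0} := ⟨n, fun i hi => hi.1⟩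
  exact Nat.sSup_mem ⟨0, h0⟩ hb

lemma st3sig_le (n : ℕ) (x : Fin n → ℝ) : st3sig n x ≤ n := (st3set_mem n x).1

lemma st3sig_eq_iff (n : ℕ) (x : Fin n → ℝ) (k : ℕ) :
    st3sig n x = k ↔ (k ≤ n ∧ st3S n x k ≤ 0 ∧ ∀ i, k < i → i ≤ n → 0 < st3S n x i) := by
  constructor
  · rintro rfl
    refine ⟨(st3set_mem n x).1, (st3set_mem n x).2, fun i h1 h2 => ?_⟩
    by_contra h
    push_neg at h
    have : i ≤ st3sig n x := le_csSup ⟨n, fun j hj => hj.1⟩ ⟨h2, h⟩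
    omega
  · rintro ⟨hk, hS, hgt⟩
    have h1 : k ≤ st3sig n x := le_csSup ⟨n, fun j hj => hj.1⟩ ⟨hk, hS⟩
    have h2 := st3set_mem n x
    by_contra hne
    have hlt : k < st3sig n x := by omega
    exact absurd h2.2 (not_le.mpr (hgt _ hlt h2.1))

def st3f (n k : ℕ) : Fin n → Fin n :=
  fun j => if h : j.val < min k n then ⟨min k n - 1 - j.val, by omega⟩ else j

lemma st3f_invol (n k : ℕ) : Function.Involutive (st3f n k) := by
  intro j
  unfold st3f
  by_cases h : j.val < min k n
  · simp only [h, dif_pos]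
    have h2 : min k n - 1 - j.val < min k n := by omega
    simp only [h2, dif_pos]
    ext
    simp only []
    omega
  · rw [dif_neg h, dif_neg h]

/-- the reversal permutation on the first `min k n` coordinates -/
def st3prm (n k : ℕ) : Equiv.Perm (Fin n) :=
  Function.Involutive.toPerm (st3f n k) (st3f_invol n k)

lemma st3prm_apply (n k : ℕ) (hk : k ≤ n) (j : Fin n) :
    ((st3prm n k) j).val = if j.val < k then k - 1 - j.val else j.val := by
  have hm : min k n = k := min_eq_left hk
  simp only [st3prm, Function.Involutive.coe_toPerm, st3f]
  by_cases h : j.val < k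
  · rw [dif_pos (by omega), if_pos h]; simp [hm]
  · rw [dif_neg (by omega), if_neg h]

lemma st3prm_invol (n k : ℕ) (j : Fin n) : st3prm n k (st3prm n k j) = j := by
  simp only [st3prm, Function.Involutive.coe_toPerm]
  exact st3f_invol n k j

end Stmt3Aux

section SumLemmas

lemma st3xe_prm_lt (n k : ℕ) (hk : k ≤ n) (x : Fin n → ℝ) (j : ℕ) (hj : j < k) :
    st3xe n (x ∘ st3prm n k) j = st3xe n x (k - 1 - j) := by
  have hjn : j < n := lt_of_lt_of_le hj hk
  have hkn : k - 1 - j < n := by omega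
  rw [st3xe, dif_pos hjn, st3xe, dif_pos hkn]
  show x (st3prm n k ⟨j, hjn⟩) = x ⟨k - 1 - j, hkn⟩
  congr 1
  ext
  rw [st3prm_apply n k hk]
  simp [hj]

lemma st3xe_prm_ge (n k : ℕ) (hk : k ≤ n) (x : Fin n → ℝ) (j : ℕ) (hj : k ≤ j) :
    st3xe n (x ∘ st3prm n k) j = st3xe n x j := by
  by_cases hjn : j < n
  · rw [st3xe, dif_pos hjn, st3xe, dif_pos hjn]
    show x (st3prm n k ⟨j, hjn⟩) = x ⟨j, hjn⟩
    congr 1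
    ext
    rw [st3prm_apply n k hk]
    simp; omega
  · rw [st3xe, dif_neg hjn, st3xe, dif_neg hjn]

lemma st3S_split (n : ℕ) (y : Fin n → ℝ) (a b : ℕ) (h : a ≤ b) :
    st3S n y b = st3S n y a + ∑ j ∈ Ico a b, st3xe n y j := by
  rw [st3S, st3S, range_eq_Ico, range_eq_Ico]
  exact (Finset.sum_Ico_consecutive (st3xe n y) (Nat.zero_le a) h).symm

lemma st3S_prm_le (n k : ℕ) (hk : k ≤ n) (x : Fin n → ℝ) (i : ℕ) (hi : i ≤ k) :
    st3S n (x ∘ st3prm n k) i = st3S n x k - st3S n x (k - i) := by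
  have hsplit := st3S_split n x (k - i) k (by omega)
  rw [hsplit]
  ring_nf
  rw [st3S]
  have : ∀ j ∈ range i, st3xe n (x ∘ st3prm n k) j = st3xe n x (k - 1 - j) := by
    intro j hj
    exact st3xe_prm_lt n k hk x j (by simp at hj; omega)
  rw [Finset.sum_congr rfl this]
  refine Finset.sum_nbij' (fun j => k - 1 - j) (fun j => k - 1 - j) ?_ ?_ ?_ ?_ ?_
  · intro a ha; simp at ha ⊢; omega
  · intro a ha; simp at ha ⊢; omega
  · intro a ha; simp at ha ⊢; omega
  · intro a ha; simp at ha ⊢; omega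
  · intro a ha; rfl

end SumLemmas

lemma st3S_prm_ge (n k : ℕ) (hk : k ≤ n) (x : Fin n → ℝ) (i : ℕ) (hi : k ≤ i) :
    st3S n (x ∘ st3prm n k) i = st3S n x i := by
  rw [st3S_split n _ k i hi, st3S_split n x k i hi,
    st3S_prm_le n k hk x k le_rfl]
  simp only [Nat.sub_self, st3S_zero, sub_zero]
  congr 1
  refine Finset.sum_congr rfl fun j hj => ?_
  simp only [mem_Ico] at hj
  exact st3xe_prm_ge n k hk x j hj.1

lemma st3sig_prm (n k : ℕ) (hk : k ≤ n) (x : Fin n → ℝ) (hx : st3sig n x = k) :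
    st3sig n (x ∘ st3prm n k) = k := by
  rw [st3sig_eq_iff] at hx ⊢
  obtain ⟨-, hS, hgt⟩ := hx
  refine ⟨hk, ?_, fun i h1 h2 => ?_⟩
  · rw [st3S_prm_le n k hk x k le_rfl]
    simp only [Nat.sub_self, st3S_zero, sub_zero]
    exact hS
  · rw [st3S_prm_ge n k hk x i (le_of_lt h1)]
    exact hgt i h1 h2

lemma st3np_prm (n k : ℕ) (hk : k ≤ n) (x : Fin n → ℝ) (hx : st3sig n x = k) :
    st3np n (x ∘ st3prm n k) = st3nm n x := by
  rw [st3np, st3nm, st3sig_prm n k hk x hx, hx]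
  refine Finset.sum_nbij' (fun i => k - i) (fun j => k - j) ?_ ?_ ?_ ?_ ?_
  · intro a ha; simp at ha ⊢; omega
  · intro a ha; simp at ha ⊢; omega
  · intro a ha; simp at ha ⊢; omega
  · intro a ha; simp at ha ⊢; omega
  · intro a ha
    simp only [mem_Icc] at ha
    rw [st3S_prm_le n k hk x a (by omega)]
    congr 1
    rw [eq_iff_iff]
    constructor
    · intro h; linarith
    · intro h; linarith

lemma st3prm_comp_invol (n k : ℕ) (x : Fin n → ℝ) :
    (x ∘ st3prm n k) ∘ st3prm n k = x := by
  funext j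
  simp only [Function.comp_apply, st3prm_invol]

section Meas

lemma st3xe_meas (n : ℕ) (j : ℕ) : Measurable (fun x : Fin n → ℝ => st3xe n x j) := by
  unfold st3xe
  by_cases h : j < n
  · simp only [dif_pos h]; exact measurable_pi_apply _
  · simp only [dif_neg h]; exact measurable_const

lemma st3S_meas (n : ℕ) (i : ℕ) : Measurable (fun x : Fin n → ℝ => st3S n x i) := by
  unfold st3S
  exact Finset.measurable_sum _ fun j _ => st3xe_meas n j

lemma st3sig_set_meas (n k : ℕ) :
    MeasurableSet {x : Fin n → ℝ | st3sig n x = k} := by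
  have : {x : Fin n → ℝ | st3sig n x = k}
      = {x | k ≤ n} ∩ ({x | st3S n x k ≤ 0} ∩ ⋂ i ∈ Ioc k n, {x | 0 < st3S n x i}) := by
    ext x
    simp only [Set.mem_setOf_eq, Set.mem_inter_iff, Set.mem_iInter, mem_Ioc,
      st3sig_eq_iff]
    constructor
    · rintro ⟨h1, h2, h3⟩; exact ⟨h1, h2, fun i hi => h3 i hi.1 hi.2⟩
    · rintro ⟨h1, h2, h3⟩; exact ⟨h1, h2, fun i ha hb => h3 i ⟨ha, hb⟩⟩
  rw [this]
  refine MeasurableSet.inter ?_ (MeasurableSet.inter ?_ ?_)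
  · by_cases h : k ≤ n
    · simp only [h, Set.setOf_true]; exact MeasurableSet.univ
    · simp only [h, Set.setOf_false]; exact MeasurableSet.empty
  · exact measurableSet_le (st3S_meas n k) measurable_const
  · exact MeasurableSet.biInter (Set.to_countable _)
      fun i _ => measurableSet_lt measurable_const (st3S_meas n i)

lemma st3sig_meas (n : ℕ) : Measurable (st3sig n) :=
  measurable_to_countable' fun k => st3sig_set_meas n k

lemma st3Ssig_eq (n : ℕ) (x : Fin n → ℝ) :
    st3S n x (st3sig n x)
      = ∑ k ∈ range (n + 1), if st3sig n x = k then st3S n x k else 0 := by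
  rw [Finset.sum_eq_single (st3sig n x)]
  · simp
  · intro b _ hb; rw [if_neg (Ne.symm hb)]
  · intro h
    exact absurd (Finset.mem_range.mpr (Nat.lt_succ_of_le (st3sig_le n x))) h

lemma st3Ssig_meas (n : ℕ) : Measurable (fun x : Fin n → ℝ => st3S n x (st3sig n x)) := by
  simp only [st3Ssig_eq n]
  refine Finset.measurable_sum _ fun k _ => Measurable.ite (st3sig_set_meas n k)
    (st3S_meas n k) measurable_const

lemma st3np_eq (n : ℕ) (x : Fin n → ℝ) :
    st3np n x = ∑ i ∈ Icc 1 n, if i ≤ st3sig n x ∧ 0 ≤ st3S n x i then 1 else 0 := by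
  rw [st3np]
  rw [show Icc 1 n = Icc 1 (st3sig n x) ∪ Ioc (st3sig n x) n from ?_]
  · rw [Finset.sum_union]
    · have h1 : ∀ i ∈ Icc 1 (st3sig n x),
          (if i ≤ st3sig n x ∧ 0 ≤ st3S n x i then (1:ℕ) else 0)
            = if 0 ≤ st3S n x i then 1 else 0 := by
        intro i hi
        simp only [mem_Icc] at hi
        simp [hi.2]
      rw [Finset.sum_congr rfl h1]
      have h2 : ∀ i ∈ Ioc (st3sig n x) n,
          (if i ≤ st3sig n x ∧ 0 ≤ st3S n x i then (1:ℕ) else 0) = 0 := by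
        intro i hi
        simp only [mem_Ioc] at hi
        simp [Nat.not_le.mpr hi.1]
      rw [Finset.sum_congr rfl h2]
      simp
    · rw [Finset.disjoint_left]
      intro a ha hb
      simp only [mem_Icc] at ha
      simp only [mem_Ioc] at hb
      omega
  · ext i
    simp only [mem_Icc, mem_union, mem_Ioc]
    have := st3sig_le n x
    omega

lemma st3np_meas (n : ℕ) : Measurable (st3np n) := by
  have : st3np n = fun x => ∑ i ∈ Icc 1 n,
      if i ≤ st3sig n x ∧ 0 ≤ st3S n x i then 1 else 0 := funext (st3np_eq n)
  rw [this]
  refine Finset.measurable_sum _ fun i _ => Measurable.ite ?_ measurable_const measurable_const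
  exact MeasurableSet.inter (measurableSet_le measurable_const (st3sig_meas n))
    (measurableSet_le measurable_const (st3S_meas n i))

lemma st3nm_eq (n : ℕ) (x : Fin n → ℝ) :
    st3nm n x = ∑ i ∈ range n,
      if i < st3sig n x ∧ st3S n x i ≤ st3S n x (st3sig n x) then 1 else 0 := by
  rw [st3nm]
  rw [show range n = range (st3sig n x) ∪ Ico (st3sig n x) n from ?_]
  · rw [Finset.sum_union]
    · have h1 : ∀ i ∈ range (st3sig n x),
          (if i < st3sig n x ∧ st3S n x i ≤ st3S n x (st3sig n x) then (1:ℕ) else 0)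
            = if st3S n x i ≤ st3S n x (st3sig n x) then 1 else 0 := by
        intro i hi
        simp only [mem_range] at hi
        simp [hi]
      rw [Finset.sum_congr rfl h1]
      have h2 : ∀ i ∈ Ico (st3sig n x) n,
          (if i < st3sig n x ∧ st3S n x i ≤ st3S n x (st3sig n x) then (1:ℕ) else 0) = 0 := by
        intro i hi
        simp only [mem_Ico] at hi
        simp [Nat.not_lt.mpr hi.1]
      rw [Finset.sum_congr rfl h2]
      simp
    · rw [Finset.disjoint_left]
      intro a ha hb
      simp only [mem_range] at ha
      simp only [mem_Ico] at hb
      omega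
  · ext i
    simp only [mem_range, mem_union, mem_Ico]
    have := st3sig_le n x
    omega

lemma st3nm_meas (n : ℕ) : Measurable (st3nm n) := by
  have : st3nm n = fun x => ∑ i ∈ range n,
      if i < st3sig n x ∧ st3S n x i ≤ st3S n x (st3sig n x) then 1 else 0 :=
    funext (st3nm_eq n)
  rw [this]
  refine Finset.measurable_sum _ fun i _ => Measurable.ite ?_ measurable_const measurable_const
  exact MeasurableSet.inter
    (measurableSet_lt measurable_const (st3sig_meas n))
    (measurableSet_le (st3S_meas n i) (st3Ssig_meas n))

lemma st3comp_meas (n k : ℕ) : Measurable (fun x : Fin n → ℝ => x ∘ st3prm n k) :=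
  measurable_pi_lambda _ fun i => measurable_pi_apply _

end Meas

section Prob

variable {Ω : Type*} [MeasurableSpace Ω] (μ : Measure Ω) [IsProbabilityMeasure μ]

lemma st3joint (n : ℕ) (ζ : ℕ → Ω → ℝ)
    (hmeas : ∀ i, Measurable (ζ i))
    (hindep : ProbabilityTheory.iIndepFun ζ μ)
    (hident : ∀ i, μ.map (ζ i) = μ.map (ζ 0))
    (e : Fin n ≃ Fin n) :
    Measure.pi (fun _ : Fin n => μ.map (ζ 0))
      = μ.map (fun ω (i : Fin n) => ζ (e i) ω) := by
  have hm : IsProbabilityMeasure (μ.map (ζ 0)) :=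
    Measure.isProbabilityMeasure_map (hmeas 0).aemeasurable
  have hY : Measurable (fun ω (i : Fin n) => ζ (e i) ω) :=
    measurable_pi_lambda _ fun i => hmeas _
  refine Measure.pi_eq fun s hs => ?_
  classical
  set sets : ℕ → Set ℝ := fun j => if h : j < n then s (e.symm ⟨j, h⟩) else Set.univ with hsets
  have hsetsm : ∀ j, MeasurableSet (sets j) := by
    intro j
    rw [hsets]
    by_cases h : j < n
    · simp only [dif_pos h]; exact hs _
    · simp only [dif_neg h]; exact MeasurableSet.univ
  rw [Measure.map_apply hY (MeasurableSet.univ_pi hs)]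
  have hpre : (fun ω (i : Fin n) => ζ (e i) ω) ⁻¹' (Set.univ.pi s)
      = ⋂ j ∈ Finset.range n, ζ j ⁻¹' sets j := by
    ext ω
    simp only [Set.mem_preimage, Set.mem_pi, Set.mem_univ, forall_true_left,
      Set.mem_iInter, Finset.mem_range, true_implies]
    constructor
    · intro h j hj
      have := h (e.symm ⟨j, hj⟩)
      simp only [Equiv.apply_symm_apply] at this
      rw [hsets]
      simp only [dif_pos hj]
      exact this
    · intro h i
      have hj : ((e i : Fin n) : ℕ) < n := (e i).isLt
      have := h _ hj
      rw [hsets] at this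
      simp only [dif_pos hj] at this
      have heq : e.symm ⟨((e i : Fin n) : ℕ), hj⟩ = i := by
        rw [show (⟨((e i : Fin n) : ℕ), hj⟩ : Fin n) = e i from Fin.eta _ _]
        exact e.symm_apply_apply i
      rwa [heq] at this
  rw [hpre, hindep.measure_inter_preimage_eq_mul (Finset.range n)
    (fun j hj => hsetsm j)]
  have hfac : ∀ j, μ (ζ j ⁻¹' sets j) = (μ.map (ζ 0)) (sets j) := by
    intro j
    rw [← hident j, Measure.map_apply (hmeas j) (hsetsm j)]
  rw [Finset.prod_congr rfl fun j _ => hfac j]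
  rw [← Fin.prod_univ_eq_prod_range (fun j => (μ.map (ζ 0)) (sets j)) n]
  rw [← Equiv.prod_comp e (fun i : Fin n => (μ.map (ζ 0)) (sets i))]
  refine Finset.prod_congr rfl fun i _ => ?_
  congr 1
  rw [hsets]
  simp only [Fin.is_lt, dif_pos]
  congr 1
  rw [show (⟨((e i : Fin n) : ℕ), (e i).isLt⟩ : Fin n) = e i from Fin.eta _ _]
  rw [e.symm_apply_apply]

end Prob

/-- N⁺ = Σ_{i=1}^σ 1{S_i ≥ 0} and Ñ⁻ = Σ_{i=0}^{σ−1} 1{S_i ≤ S_σ} have the same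
distribution. -/
theorem stmt_3 {Ω : Type*} [MeasurableSpace Ω] (μ : Measure Ω) [IsProbabilityMeasure μ]
    (n : ℕ) (ζ : ℕ → Ω → ℝ)
    (hmeas : ∀ i, Measurable (ζ i))
    (hindep : ProbabilityTheory.iIndepFun ζ μ)
    (hident : ∀ i, μ.map (ζ i) = μ.map (ζ 0))
    (S : ℕ → Ω → ℝ) (hS : ∀ i ω, S i ω = ∑ j ∈ Finset.range i, ζ j ω)
    (σ : Ω → ℕ) (hσ : ∀ ω, σ ω = sSup {i | i ≤ n ∧ S i ω ≤ 0})
    (Nplus Ntildeminus : Ω → ℕ)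
    (hNplus : ∀ ω, Nplus ω = ∑ i ∈ Finset.Icc 1 (σ ω), if 0 ≤ S i ω then 1 else 0)
    (hNtildeminus : ∀ ω, Ntildeminus ω =
      ∑ i ∈ Finset.range (σ ω), if S i ω ≤ S (σ ω) ω then 1 else 0) :
    μ.map Nplus = μ.map Ntildeminus := by
  classical
  set X : Ω → (Fin n → ℝ) := fun ω (i : Fin n) => ζ i ω with hX
  have mX : Measurable X := measurable_pi_lambda _ fun i => hmeas _
  -- partial sums agree
  have hpS : ∀ ω i, i ≤ n → st3S n (X ω) i = S i ω := by
    intro ω i hi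
    rw [hS, st3S]
    refine Finset.sum_congr rfl fun j hj => ?_
    simp only [mem_range] at hj
    have hjn : j < n := lt_of_lt_of_le hj hi
    rw [st3xe, dif_pos hjn]
  -- sigma agrees
  have hsigX : ∀ ω, st3sig n (X ω) = σ ω := by
    intro ω
    rw [hσ, st3sig]
    congr 1
    ext i
    simp only [Set.mem_setOf_eq]
    constructor
    · rintro ⟨h1, h2⟩; exact ⟨h1, by rwa [hpS ω i h1] at h2⟩
    · rintro ⟨h1, h2⟩; exact ⟨h1, by rwa [hpS ω i h1]⟩
  -- Nplus, Ntildeminus factor through X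
  have hNp : Nplus = st3np n ∘ X := by
    funext ω
    rw [Function.comp_apply, hNplus, st3np, hsigX ω]
    refine Finset.sum_congr rfl fun i hi => ?_
    simp only [mem_Icc] at hi
    have hin : i ≤ n := le_trans hi.2 ((hsigX ω) ▸ st3sig_le n (X ω))
    rw [hpS ω i hin]
  have hNm : Ntildeminus = st3nm n ∘ X := by
    funext ω
    rw [Function.comp_apply, hNtildeminus, st3nm, hsigX ω]
    have hsn : σ ω ≤ n := (hsigX ω) ▸ st3sig_le n (X ω)
    refine Finset.sum_congr rfl fun i hi => ?_
    simp only [mem_range] at hi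
    rw [hpS ω i (le_trans (le_of_lt hi) hsn), hpS ω (σ ω) hsn]
  -- invariance of the joint law under the reversal permutations
  have hinv : ∀ k, (μ.map X).map (fun x => x ∘ st3prm n k) = μ.map X := by
    intro k
    rw [Measure.map_map (st3comp_meas n k) mX]
    have h1 : ((fun x : Fin n → ℝ => x ∘ st3prm n k) ∘ X)
        = fun ω (i : Fin n) => ζ ((st3prm n k) i) ω := rfl
    rw [h1, ← st3joint μ n ζ hmeas hindep hident (st3prm n k)]
    have h2 : X = fun ω (i : Fin n) => ζ ((Equiv.refl (Fin n)) i) ω := rfl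
    rw [h2, ← st3joint μ n ζ hmeas hindep hident (Equiv.refl (Fin n))]
  -- the two pushforwards
  rw [hNp, hNm, ← Measure.map_map (st3np_meas n) mX, ← Measure.map_map (st3nm_meas n) mX]
  set ν := μ.map X with hν
  refine Measure.ext fun A hA => ?_
  rw [Measure.map_apply (st3np_meas n) hA, Measure.map_apply (st3nm_meas n) hA]
  -- partition according to the value of sigma
  have hpart : ∀ B : Set (Fin n → ℝ), MeasurableSet B →
      ν B = ∑ k ∈ range (n + 1), ν (B ∩ {x | st3sig n x = k}) := by
    intro B hB
    have hcov : B = ⋃ k ∈ Finset.range (n + 1), (B ∩ {x | st3sig n x = k}) := by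
      ext x
      simp only [Set.mem_iUnion, Finset.mem_range, Set.mem_inter_iff, Set.mem_setOf_eq]
      constructor
      · intro hx
        exact ⟨st3sig n x, Nat.lt_succ_of_le (st3sig_le n x), hx, rfl⟩
      · rintro ⟨k, -, hx, -⟩; exact hx
    conv_lhs => rw [hcov]
    refine measure_biUnion_finset ?_ fun k _ => hB.inter (st3sig_set_meas n k)
    intro a _ b _ hab
    refine Set.disjoint_left.mpr fun x hxa hxb => ?_
    exact hab (hxa.2.symm.trans hxb.2)
  rw [hpart _ ((st3np_meas n) hA), hpart _ ((st3nm_meas n) hA)]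
  refine Finset.sum_congr rfl fun k hk => ?_
  have hkn : k ≤ n := by simp only [mem_range] at hk; omega
  -- use invariance under st3prm n k
  have hBset : MeasurableSet (st3np n ⁻¹' A ∩ {x | st3sig n x = k}) :=
    ((st3np_meas n) hA).inter (st3sig_set_meas n k)
  conv_lhs => rw [← hinv k]
  rw [Measure.map_apply (st3comp_meas n k) hBset]
  congr 1
  ext x
  simp only [Set.mem_preimage, Set.mem_inter_iff, Set.mem_setOf_eq]
  constructor
  · rintro ⟨h1, h2⟩
    have hx : st3sig n x = k := by
      have := st3sig_prm n k hkn (x ∘ st3prm n k) h2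
      rwa [st3prm_comp_invol] at this
    rw [st3np_prm n k hkn x hx] at h1
    exact ⟨h1, hx⟩
  · rintro ⟨h1, h2⟩
    exact ⟨by rwa [st3np_prm n k hkn x h2], st3sig_prm n k hkn x h2⟩
end

section
/- Let ζ₁,…,ζₙ be i.i.d. real random variables, S_i the random walk, σ = max{i ≤ n : S_i ≤ 0}, and let S̲ = min{S_i : i ≤ σ}, S̄ = max{S_i : i ≤ σ}. Define the forward time of the minimum →F = max{i ≤ σ : S_i = S̲} and the backward time of the maximum ←G = σ − min{i ≤ σ : S_i = S̄}. Then →F and ←G have the same distribution. -/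
open MeasureTheory ProbabilityTheory Finset

namespace Stmt4Aux

/-- partial sums of first `n` coordinates -/
noncomputable def w (n : ℕ) (x : Fin n → ℝ) (i : ℕ) : ℝ :=
  ∑ j ∈ Finset.range i, if h : j < n then x ⟨j, h⟩ else 0

lemma w_zero (n : ℕ) (x : Fin n → ℝ) : w n x 0 = 0 := by simp [w]

lemma measurable_w (n i : ℕ) : Measurable (fun x : Fin n → ℝ => w n x i) := by
  unfold w
  exact Finset.measurable_sum _ fun j _ => by
    split
    · exact measurable_pi_apply _
    · exact measurable_const

/-- the stopping index -/
noncomputable def sig (n : ℕ) (x : Fin n → ℝ) : ℕ :=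
  sSup {i | i ≤ n ∧ w n x i ≤ 0}

lemma sig_spec (n : ℕ) (x : Fin n → ℝ) :
    sig n x ≤ n ∧ w n x (sig n x) ≤ 0 ∧ ∀ i ≤ n, w n x i ≤ 0 → i ≤ sig n x := by
  have hne : (0:ℕ) ∈ {i | i ≤ n ∧ w n x i ≤ 0} := ⟨Nat.zero_le n, by rw [w_zero]⟩
  have hbdd : BddAbove {i | i ≤ n ∧ w n x i ≤ 0} := ⟨n, fun i hi => hi.1⟩
  have hmem := Nat.sSup_mem ⟨0, hne⟩ hbdd
  exact ⟨hmem.1, hmem.2, fun i hi hw => le_csSup hbdd ⟨hi, hw⟩⟩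

lemma sig_le (n : ℕ) (x : Fin n → ℝ) : sig n x ≤ n := (sig_spec n x).1

lemma sig_eq_iff (n k : ℕ) (x : Fin n → ℝ) :
    sig n x = k ↔ (k ≤ n ∧ w n x k ≤ 0) ∧ ∀ i ≤ n, w n x i ≤ 0 → i ≤ k := by
  constructor
  · rintro rfl
    obtain ⟨h1, h2, h3⟩ := sig_spec n x
    exact ⟨⟨h1, h2⟩, h3⟩
  · rintro ⟨⟨hk, hwk⟩, hub⟩
    obtain ⟨h1, h2, h3⟩ := sig_spec n x
    exact le_antisymm (hub _ h1 h2) (h3 _ hk hwk)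


def revFun (n k : ℕ) (j : Fin n) : Fin n :=
  if h : (j : ℕ) < k ∧ k ≤ n then ⟨k - 1 - (j : ℕ), by omega⟩ else j

lemma revFun_involutive (n k : ℕ) : Function.Involutive (revFun n k) := by
  intro j
  simp only [revFun]
  ext
  simp only [apply_dite (Fin.val)]
  split_ifs <;> simp_all <;> omega

/-- reversal of the first `k` coordinates, as a permutation -/
def revE (n k : ℕ) : Equiv.Perm (Fin n) := (revFun_involutive n k).toPerm _

lemma revE_apply (n k : ℕ) (j : Fin n) : revE n k j = revFun n k j := rfl

lemma measurable_comp_perm (n : ℕ) (e : Equiv.Perm (Fin n)) :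
    Measurable (fun x : Fin n → ℝ => x ∘ e) :=
  measurable_pi_lambda _ fun j => measurable_pi_apply (e j)

/-- reversed walk below k -/
lemma w_rev_le (n k : ℕ) (hk : k ≤ n) (x : Fin n → ℝ) {i : ℕ} (hi : i ≤ k) :
    w n (x ∘ revE n k) i = w n x k - w n x (k - i) := by
  have key : w n x (k - i) + w n (x ∘ revE n k) i = w n x k := by
    unfold w
    have h1 : ∀ j ∈ Finset.range i,
        (if h : j < n then (x ∘ revE n k) ⟨j, h⟩ else 0)
          = (if h : k - 1 - j < n then x ⟨k - 1 - j, h⟩ else 0) := by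
      intro j hj
      rw [Finset.mem_range] at hj
      have hjn : j < n := by omega
      have hkn : k - 1 - j < n := by omega
      rw [dif_pos hjn, dif_pos hkn]
      simp only [Function.comp_apply, revE_apply, revFun]
      rw [dif_pos ⟨by simpa using by omega, hk⟩]
    rw [Finset.sum_congr rfl h1]
    have h2 : ∑ j ∈ Finset.range i, (if h : k - 1 - j < n then x ⟨k - 1 - j, h⟩ else 0)
        = ∑ j ∈ Finset.range i, (if h : k - i + j < n then x ⟨k - i + j, h⟩ else 0) := by
      rw [← Finset.sum_range_reflect]
      refine Finset.sum_congr rfl fun j hj => ?_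
      rw [Finset.mem_range] at hj
      simp only [show k - 1 - (i - 1 - j) = k - i + j from by omega]
    rw [h2]
    conv_rhs => rw [show k = (k - i) + i from by omega]
    rw [Finset.sum_range_add]
  linarith

/-- reversed walk above k -/
lemma w_rev_ge (n k : ℕ) (hk : k ≤ n) (x : Fin n → ℝ) {i : ℕ} (hi : k ≤ i) :
    w n (x ∘ revE n k) i = w n x i := by
  have hsplit : ∀ y : Fin n → ℝ, w n y i = w n y k + ∑ j ∈ Finset.Ico k i,
      (if h : j < n then y ⟨j, h⟩ else 0) := by
    intro y
    unfold w
    rw [← Finset.sum_range_add_sum_Ico _ hi]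
  rw [hsplit, hsplit]
  have hwk : w n (x ∘ revE n k) k = w n x k - w n x (k - k) := w_rev_le n k hk x le_rfl
  rw [hwk]
  simp only [Nat.sub_self, w_zero, sub_zero]
  congr 1
  refine Finset.sum_congr rfl fun j hj => ?_
  rw [Finset.mem_Ico] at hj
  split
  · rename_i h
    simp only [Function.comp_apply, revE_apply, revFun]
    rw [dif_neg]
    simp only [not_and]
    intro hlt
    omega
  · rfl

lemma sig_rev (n k : ℕ) (x : Fin n → ℝ) (hx : sig n x = k) :
    sig n (x ∘ revE n k) = k := by
  rw [sig_eq_iff] at hx ⊢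
  obtain ⟨⟨hk, hwk⟩, hub⟩ := hx
  refine ⟨⟨hk, ?_⟩, fun i hi hw => ?_⟩
  · rw [w_rev_le n k hk x le_rfl]
    simp [w_zero]
    linarith
  · by_contra hik
    push_neg at hik
    rw [w_rev_ge n k hk x (le_of_lt hik)] at hw
    exact absurd (hub i hi hw) (by omega)


lemma nat_sSup_eq_iff {B : Set ℕ} (hne : B.Nonempty) (hbdd : BddAbove B) {m : ℕ} :
    sSup B = m ↔ m ∈ B ∧ ∀ i ∈ B, i ≤ m := by
  constructor
  · rintro rfl
    exact ⟨Nat.sSup_mem hne hbdd, fun i hi => le_csSup hbdd hi⟩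
  · rintro ⟨hm, hub⟩
    exact le_antisymm (csSup_le hne hub) (le_csSup hbdd hm)

lemma nat_sInf_eq_iff {C : Set ℕ} (hne : C.Nonempty) {c : ℕ} :
    sInf C = c ↔ c ∈ C ∧ ∀ i ∈ C, c ≤ i := by
  constructor
  · rintro rfl
    exact ⟨Nat.sInf_mem hne, fun i hi => Nat.sInf_le hi⟩
  · rintro ⟨hc, hlb⟩
    exact le_antisymm (Nat.sInf_le hc) (le_csInf hne hlb)

variable {f : ℕ → ℝ} {k : ℕ}

lemma img_fin (f : ℕ → ℝ) (k : ℕ) : (f '' Set.Iic k).Finite := (Set.finite_Iic k).image f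

lemma img_ne (f : ℕ → ℝ) (k : ℕ) : (f '' Set.Iic k).Nonempty :=
  ⟨f 0, ⟨0, Set.mem_Iic.2 (Nat.zero_le k), rfl⟩⟩

lemma csInf_img_le {i : ℕ} (hi : i ≤ k) : sInf (f '' Set.Iic k) ≤ f i :=
  csInf_le (img_fin f k).bddBelow ⟨i, Set.mem_Iic.2 hi, rfl⟩

lemma le_csSup_img {i : ℕ} (hi : i ≤ k) : f i ≤ sSup (f '' Set.Iic k) :=
  le_csSup (img_fin f k).bddAbove ⟨i, Set.mem_Iic.2 hi, rfl⟩

lemma exists_min (f : ℕ → ℝ) (k : ℕ) : ∃ j ≤ k, f j = sInf (f '' Set.Iic k) := by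
  have := (img_ne f k).csInf_mem (img_fin f k)
  obtain ⟨j, hj, hje⟩ := this
  exact ⟨j, Set.mem_Iic.1 hj, hje⟩

lemma exists_max (f : ℕ → ℝ) (k : ℕ) : ∃ j ≤ k, f j = sSup (f '' Set.Iic k) := by
  have := (img_ne f k).csSup_mem (img_fin f k)
  obtain ⟨j, hj, hje⟩ := this
  exact ⟨j, Set.mem_Iic.1 hj, hje⟩

lemma eq_csInf_iff {i : ℕ} (hi : i ≤ k) :
    f i = sInf (f '' Set.Iic k) ↔ ∀ j ≤ k, f i ≤ f j := by
  constructor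
  · intro h j hj
    rw [h]; exact csInf_img_le hj
  · intro h
    refine le_antisymm (le_csInf (img_ne f k) ?_) (csInf_img_le hi)
    rintro a ⟨j, hj, rfl⟩
    exact h j (Set.mem_Iic.1 hj)

lemma eq_csSup_iff {i : ℕ} (hi : i ≤ k) :
    f i = sSup (f '' Set.Iic k) ↔ ∀ j ≤ k, f j ≤ f i := by
  constructor
  · intro h j hj
    rw [h]; exact le_csSup_img hj
  · intro h
    refine le_antisymm (le_csSup_img hi) (csSup_le (img_ne f k) ?_)
    rintro a ⟨j, hj, rfl⟩
    exact h j (Set.mem_Iic.1 hj)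

noncomputable def Ff (n : ℕ) (x : Fin n → ℝ) : ℕ :=
  sSup {i | i ≤ sig n x ∧ w n x i = sInf ((w n x) '' Set.Iic (sig n x))}

noncomputable def Gg (n : ℕ) (x : Fin n → ℝ) : ℕ :=
  sig n x - sInf {i | i ≤ sig n x ∧ w n x i = sSup ((w n x) '' Set.Iic (sig n x))}

/-- the key combinatorial identity -/
lemma Ff_rev (n : ℕ) (x : Fin n → ℝ) : Ff n (x ∘ revE n (sig n x)) = Gg n x := by
  set k := sig n x with hkdef
  have hk : k ≤ n := sig_le n x
  set f := w n x with hfdef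
  set f' := w n (x ∘ revE n k) with hf'def
  have hrev : ∀ i ≤ k, f' i = f k - f (k - i) := fun i hi => w_rev_le n k hk x hi
  have hsig' : sig n (x ∘ revE n k) = k := sig_rev n k x rfl
  set M := sSup (f '' Set.Iic k) with hMdef
  set C := {i | i ≤ k ∧ f i = M} with hCdef
  have hCne : C.Nonempty := by
    obtain ⟨j, hj, hje⟩ := exists_max f k
    exact ⟨j, hj, hje⟩
  set c0 := sInf C with hc0def
  have hc0 : c0 ∈ C := Nat.sInf_mem hCne
  have hc0k : c0 ≤ k := hc0.1
  have hGg : Gg n x = k - c0 := rfl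
  rw [hGg]
  -- compute the min of the reversed walk
  have hm' : sInf (f' '' Set.Iic k) = f k - M := by
    refine le_antisymm (csInf_le (img_fin f' k).bddBelow ⟨k - c0, Set.mem_Iic.2 (by omega), ?_⟩)
      (le_csInf (img_ne f' k) ?_)
    · rw [hrev _ (by omega : k - c0 ≤ k), show k - (k - c0) = c0 from by omega, hc0.2]
    · rintro a ⟨i, hi, rfl⟩
      rw [hrev _ (Set.mem_Iic.1 hi)]
      have : f (k - i) ≤ M := le_csSup_img (by omega)
      linarith
  -- now identify Ff of the reversed walk
  unfold Ff
  rw [hsig', ← hf'def, hm']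
  rw [nat_sSup_eq_iff]
  · refine ⟨⟨by omega, ?_⟩, ?_⟩
    · rw [hrev _ (by omega : k - c0 ≤ k), show k - (k - c0) = c0 from by omega, hc0.2]
    · rintro i ⟨hik, hieq⟩
      rw [hrev _ hik] at hieq
      have hfM : f (k - i) = M := by linarith
      have : c0 ≤ k - i := Nat.sInf_le ⟨by omega, hfM⟩
      omega
  · refine ⟨k - c0, by omega, ?_⟩
    rw [hrev _ (by omega : k - c0 ≤ k), show k - (k - c0) = c0 from by omega, hc0.2]
  · exact ⟨k, fun i hi => hi.1⟩

lemma meas_imp {α : Type*} [MeasurableSpace α] {P Q : α → Prop}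
    (hP : MeasurableSet {x | P x}) (hQ : MeasurableSet {x | Q x}) :
    MeasurableSet {x | P x → Q x} := by
  have : {x | P x → Q x} = {x | P x}ᶜ ∪ {x | Q x} := by
    ext x; simp [imp_iff_not_or]
  rw [this]
  exact hP.compl.union hQ

lemma meas_w_le (n : ℕ) (a b : ℕ) :
    MeasurableSet {x : Fin n → ℝ | w n x a ≤ w n x b} :=
  measurableSet_le (measurable_w n a) (measurable_w n b)

lemma meas_w_nonpos (n : ℕ) (a : ℕ) :
    MeasurableSet {x : Fin n → ℝ | w n x a ≤ 0} :=
  measurableSet_le (measurable_w n a) measurable_const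

lemma meas_sig_eq (n k : ℕ) : MeasurableSet {x : Fin n → ℝ | sig n x = k} := by
  have hset : {x : Fin n → ℝ | sig n x = k} =
      ({_x : Fin n → ℝ | k ≤ n} ∩ {x | w n x k ≤ 0}) ∩
        ⋂ i ∈ Set.Iic n, {x | w n x i ≤ 0 → i ≤ k} := by
    ext x
    simp only [Set.mem_setOf_eq, Set.mem_inter_iff, Set.mem_iInter, Set.mem_Iic, sig_eq_iff]
  rw [hset]
  refine (MeasurableSet.inter (MeasurableSet.inter (MeasurableSet.const _) (meas_w_nonpos n k))
    (MeasurableSet.biInter (Set.to_countable _) fun i _ => ?_))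
  exact meas_imp (meas_w_nonpos n i) (MeasurableSet.const _)

lemma measurable_sig (n : ℕ) : Measurable (sig n) :=
  measurable_to_countable' (meas_sig_eq n)

lemma Ff_eq_iff (n k m : ℕ) (x : Fin n → ℝ) (hx : sig n x = k) :
    Ff n x = m ↔ (m ≤ k ∧ ∀ j ≤ k, w n x m ≤ w n x j) ∧
      ∀ i ≤ k, (∀ j ≤ k, w n x i ≤ w n x j) → i ≤ m := by
  unfold Ff
  rw [hx]
  have hBne : {i | i ≤ k ∧ w n x i = sInf ((w n x) '' Set.Iic k)}.Nonempty := by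
    obtain ⟨j, hj, hje⟩ := exists_min (w n x) k
    exact ⟨j, hj, hje⟩
  rw [nat_sSup_eq_iff hBne ⟨k, fun i hi => hi.1⟩]
  constructor
  · rintro ⟨⟨hm, hmin⟩, hub⟩
    refine ⟨⟨hm, (eq_csInf_iff hm).1 hmin⟩, fun i hi hmini => hub i ⟨hi, (eq_csInf_iff hi).2 hmini⟩⟩
  · rintro ⟨⟨hm, hmin⟩, hub⟩
    refine ⟨⟨hm, (eq_csInf_iff hm).2 hmin⟩, fun i hi => hub i hi.1 ((eq_csInf_iff hi.1).1 hi.2)⟩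

lemma Gg_eq_iff (n k m : ℕ) (x : Fin n → ℝ) (hx : sig n x = k) :
    Gg n x = m ↔ ∃ c ≤ k, ((∀ j ≤ k, w n x j ≤ w n x c) ∧
      ∀ i ≤ k, (∀ j ≤ k, w n x j ≤ w n x i) → c ≤ i) ∧ k - c = m := by
  unfold Gg
  rw [hx]
  have hCne : {i | i ≤ k ∧ w n x i = sSup ((w n x) '' Set.Iic k)}.Nonempty := by
    obtain ⟨j, hj, hje⟩ := exists_max (w n x) k
    exact ⟨j, hj, hje⟩
  constructor
  · intro h
    set c0 := sInf {i | i ≤ k ∧ w n x i = sSup ((w n x) '' Set.Iic k)} with hc0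
    have hmem := Nat.sInf_mem hCne
    rw [← hc0] at hmem
    refine ⟨c0, hmem.1, ⟨(eq_csSup_iff hmem.1).1 hmem.2, fun i hi hmaxi => ?_⟩, h⟩
    exact Nat.sInf_le ⟨hi, (eq_csSup_iff hi).2 hmaxi⟩
  · rintro ⟨c, hc, ⟨hmax, hlb⟩, rfl⟩
    have : sInf {i | i ≤ k ∧ w n x i = sSup ((w n x) '' Set.Iic k)} = c := by
      rw [nat_sInf_eq_iff hCne]
      exact ⟨⟨hc, (eq_csSup_iff hc).2 hmax⟩, fun i hi => hlb i hi.1 ((eq_csSup_iff hi.1).1 hi.2)⟩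
    rw [this]

lemma meas_Ff_eq (n m : ℕ) : MeasurableSet {x : Fin n → ℝ | Ff n x = m} := by
  have hset : {x : Fin n → ℝ | Ff n x = m} = ⋃ k ∈ Set.Iic n,
      ({x | sig n x = k} ∩
        (({_x : Fin n → ℝ | m ≤ k} ∩ ⋂ j ∈ Set.Iic k, {x | w n x m ≤ w n x j}) ∩
          ⋂ i ∈ Set.Iic k, {x | (∀ j ≤ k, w n x i ≤ w n x j) → i ≤ m})) := by
    ext x
    simp only [Set.mem_setOf_eq, Set.mem_iUnion, Set.mem_inter_iff, Set.mem_iInter, Set.mem_Iic]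
    constructor
    · intro h
      refine ⟨sig n x, sig_le n x, rfl, ?_⟩
      obtain ⟨⟨h1, h2⟩, h3⟩ := (Ff_eq_iff n (sig n x) m x rfl).1 h
      exact ⟨⟨h1, h2⟩, h3⟩
    · rintro ⟨k, hk, hsig, ⟨h1, h2⟩, h3⟩
      exact (Ff_eq_iff n k m x hsig).2 ⟨⟨h1, h2⟩, h3⟩
  rw [hset]
  refine MeasurableSet.biUnion (Set.to_countable _) fun k _ => (meas_sig_eq n k).inter
    (MeasurableSet.inter
      ((MeasurableSet.const _).inter
        (MeasurableSet.biInter (Set.to_countable _) fun j _ => meas_w_le n m j))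
      (MeasurableSet.biInter (Set.to_countable _) fun i _ => meas_imp ?_ (MeasurableSet.const _)))
  have : {x : Fin n → ℝ | ∀ j ≤ k, w n x i ≤ w n x j} =
      ⋂ j ∈ Set.Iic k, {x | w n x i ≤ w n x j} := by
    ext x; simp [Set.mem_iInter]
  rw [this]
  exact MeasurableSet.biInter (Set.to_countable _) fun j _ => meas_w_le n i j

lemma measurable_Ff (n : ℕ) : Measurable (Ff n) :=
  measurable_to_countable' (meas_Ff_eq n)

lemma meas_Gg_eq (n m : ℕ) : MeasurableSet {x : Fin n → ℝ | Gg n x = m} := by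
  have hset : {x : Fin n → ℝ | Gg n x = m} = ⋃ k ∈ Set.Iic n, ⋃ c ∈ Set.Iic k,
      ({x | sig n x = k} ∩
        ((⋂ j ∈ Set.Iic k, {x | w n x j ≤ w n x c}) ∩
          ⋂ i ∈ Set.Iic k, {x | (∀ j ≤ k, w n x j ≤ w n x i) → c ≤ i}) ∩
        {_x : Fin n → ℝ | k - c = m}) := by
    ext x
    simp only [Set.mem_setOf_eq, Set.mem_iUnion, Set.mem_inter_iff, Set.mem_iInter, Set.mem_Iic]
    constructor
    · intro h
      obtain ⟨c, hc, ⟨h1, h2⟩, h3⟩ := (Gg_eq_iff n (sig n x) m x rfl).1 h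
      exact ⟨sig n x, sig_le n x, c, hc, ⟨rfl, h1, h2⟩, h3⟩
    · rintro ⟨k, hk, c, hc, ⟨hsig, h1, h2⟩, h3⟩
      exact (Gg_eq_iff n k m x hsig).2 ⟨c, hc, ⟨h1, h2⟩, h3⟩
  have himp : ∀ (kk cc i : ℕ), MeasurableSet {x : Fin n → ℝ | (∀ j ≤ kk, w n x j ≤ w n x i) → cc ≤ i} := by
    intro kk cc i
    refine meas_imp ?_ (MeasurableSet.const _)
    have : {x : Fin n → ℝ | ∀ j ≤ kk, w n x j ≤ w n x i} =
        ⋂ j ∈ Set.Iic kk, {x | w n x j ≤ w n x i} := by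
      ext x; simp [Set.mem_iInter]
    rw [this]
    exact MeasurableSet.biInter (Set.to_countable _) fun j _ => meas_w_le n j i
  rw [hset]
  exact MeasurableSet.biUnion (Set.to_countable _) fun k _ =>
    MeasurableSet.biUnion (Set.to_countable _) fun c _ =>
    (((meas_sig_eq n k).inter
      ((MeasurableSet.biInter (Set.to_countable _) fun j _ => meas_w_le n j c).inter
        (MeasurableSet.biInter (Set.to_countable _) fun i _ => himp k c i))).inter
      (MeasurableSet.const _))

lemma measurable_Gg (n : ℕ) : Measurable (Gg n) :=
  measurable_to_countable' (meas_Gg_eq n)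

/-- the random reversal map -/
noncomputable def R (n : ℕ) (x : Fin n → ℝ) : Fin n → ℝ := x ∘ revE n (sig n x)

lemma R_preimage (n : ℕ) (t : Set (Fin n → ℝ)) :
    R n ⁻¹' t = ⋃ k ∈ Set.Iic n, ({x | sig n x = k} ∩ (fun x => x ∘ revE n k) ⁻¹' t) := by
  ext x
  simp only [Set.mem_preimage, Set.mem_iUnion, Set.mem_inter_iff, Set.mem_setOf_eq, Set.mem_Iic]
  constructor
  · intro h
    exact ⟨sig n x, sig_le n x, rfl, h⟩
  · rintro ⟨k, hk, hsig, h⟩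
    rwa [R, hsig]

lemma measurable_R (n : ℕ) : Measurable (R n) := by
  intro t ht
  rw [R_preimage]
  exact MeasurableSet.biUnion (Set.to_countable _) fun k _ =>
    (meas_sig_eq n k).inter (measurable_comp_perm n (revE n k) ht)

lemma measurePreserving_comp_perm (n : ℕ) (ν : Measure ℝ) [IsProbabilityMeasure ν]
    (e : Equiv.Perm (Fin n)) :
    MeasurePreserving (fun x : Fin n → ℝ => x ∘ e)
      (Measure.pi fun _ => ν) (Measure.pi fun _ => ν) := by
  refine ⟨measurable_comp_perm n e, ?_⟩
  symm
  apply Measure.pi_eq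
  intro s hs
  rw [Measure.map_apply (measurable_comp_perm n e) (MeasurableSet.univ_pi hs)]
  have hpre : (fun x : Fin n → ℝ => x ∘ e) ⁻¹' (Set.pi Set.univ s) =
      Set.pi Set.univ (fun j => s (e.symm j)) := by
    ext x
    simp only [Set.mem_preimage, Set.mem_pi, Set.mem_univ, forall_true_left, Function.comp_apply]
    constructor
    · intro h j
      simpa using h (e.symm j)
    · intro h i
      have := h (e i)
      rwa [Equiv.symm_apply_apply] at this
  rw [hpre, Measure.pi_pi]
  exact Equiv.prod_comp e.symm fun j => ν (s j)

lemma comp_revE_revE (n k : ℕ) (x : Fin n → ℝ) : (x ∘ revE n k) ∘ revE n k = x := by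
  funext j
  simp only [Function.comp_apply]
  congr 1
  exact revFun_involutive n k j

lemma sig_rev_iff (n k : ℕ) (x : Fin n → ℝ) :
    sig n (x ∘ revE n k) = k ↔ sig n x = k := by
  constructor
  · intro h
    have := sig_rev n k (x ∘ revE n k) h
    rwa [comp_revE_revE] at this
  · exact sig_rev n k x

lemma map_R_eq (n : ℕ) (ν : Measure ℝ) [IsProbabilityMeasure ν] :
    (Measure.pi fun _ : Fin n => ν).map (R n) = Measure.pi fun _ : Fin n => ν := by
  set π := Measure.pi fun _ : Fin n => ν with hπ
  ext A hA
  rw [Measure.map_apply (measurable_R n) hA, R_preimage]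
  have hcov : ∀ B : Set (Fin n → ℝ), MeasurableSet B →
      π (⋃ k ∈ Set.Iic n, ({x | sig n x = k} ∩ B)) = π B := by
    intro B hB
    have : (⋃ k ∈ Set.Iic n, ({x | sig n x = k} ∩ B)) = B := by
      ext x
      simp only [Set.mem_iUnion, Set.mem_inter_iff, Set.mem_setOf_eq, Set.mem_Iic]
      constructor
      · rintro ⟨k, _, _, h⟩; exact h
      · intro h; exact ⟨sig n x, sig_le n x, rfl, h⟩
    rw [this]
  -- rewrite union over Iic n as a finset union to sum measures
  have hd : ∀ k, π ({x | sig n x = k} ∩ (fun x => x ∘ revE n k) ⁻¹' A)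
      = π ({x | sig n x = k} ∩ A) := by
    intro k
    have hkey : {x : Fin n → ℝ | sig n x = k} ∩ (fun x => x ∘ revE n k) ⁻¹' A
        = (fun x => x ∘ revE n k) ⁻¹' ({x | sig n x = k} ∩ A) := by
      ext x
      simp only [Set.mem_inter_iff, Set.mem_preimage, Set.mem_setOf_eq]
      rw [sig_rev_iff]
    rw [hkey,
      (measurePreserving_comp_perm n ν (revE n k)).measure_preimage
        ((meas_sig_eq n k).inter hA).nullMeasurableSet]
  -- turn both sides into finite sums
  have hsum : ∀ (f : ℕ → Set (Fin n → ℝ)), (∀ k, MeasurableSet (f k)) →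
      (∀ k, f k ⊆ {x | sig n x = k}) →
      π (⋃ k ∈ Set.Iic n, f k) = ∑ k ∈ Finset.range (n+1), π (f k) := by
    intro f hfm hfs
    have : (⋃ k ∈ Set.Iic n, f k) = ⋃ k ∈ Finset.range (n+1), f k := by
      ext x
      simp only [Set.mem_iUnion, Finset.mem_range, Set.mem_Iic]
      constructor
      · rintro ⟨k, hk, h⟩; exact ⟨k, by omega, h⟩
      · rintro ⟨k, hk, h⟩; exact ⟨k, by omega, h⟩
    rw [this, measure_biUnion_finset ?_ fun k _ => hfm k]
    intro a _ b _ hab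
    refine Set.disjoint_left.2 fun x hxa hxb => hab ?_
    have h1 := hfs a hxa
    have h2 := hfs b hxb
    simp only [Set.mem_setOf_eq] at h1 h2
    omega
  rw [hsum _ (fun k => (meas_sig_eq n k).inter (measurable_comp_perm n (revE n k) hA))
      (fun k => Set.inter_subset_left)]
  rw [Finset.sum_congr rfl fun k _ => hd k]
  rw [← hsum _ (fun k => (meas_sig_eq n k).inter hA) (fun k => Set.inter_subset_left)]
  exact hcov A hA

end Stmt4Aux

open Stmt4Aux

/-- →F = max{i ≤ σ : S_i = min_{j ≤ σ} S_j} and ←G = σ − min{i ≤ σ : S_i = max_{j ≤ σ} S_j}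
have the same distribution. -/
theorem stmt_4 {Ω : Type*} [MeasurableSpace Ω] (μ : Measure Ω) [IsProbabilityMeasure μ]
    (n : ℕ) (ζ : ℕ → Ω → ℝ)
    (hmeas : ∀ i, Measurable (ζ i))
    (hindep : ProbabilityTheory.iIndepFun ζ μ)
    (hident : ∀ i, μ.map (ζ i) = μ.map (ζ 0))
    (S : ℕ → Ω → ℝ) (hS : ∀ i ω, S i ω = ∑ j ∈ Finset.range i, ζ j ω)
    (σ : Ω → ℕ) (hσ : ∀ ω, σ ω = sSup {i | i ≤ n ∧ S i ω ≤ 0})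
    (F G' : Ω → ℕ)
    (hF : ∀ ω, F ω = sSup {i | i ≤ σ ω ∧ S i ω = sInf ((fun j => S j ω) '' Set.Iic (σ ω))})
    (hG' : ∀ ω, G' ω =
      σ ω - sInf {i | i ≤ σ ω ∧ S i ω = sSup ((fun j => S j ω) '' Set.Iic (σ ω))}) :
    μ.map F = μ.map G' := by
  classical
  set V : Ω → (Fin n → ℝ) := fun ω j => ζ j ω with hV
  have hmeasV : Measurable V := measurable_pi_lambda _ fun j => hmeas j
  set ν := μ.map (ζ 0) with hν
  haveI : IsProbabilityMeasure ν := Measure.isProbabilityMeasure_map (hmeas 0).aemeasurable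
  -- the joint law of the first n increments is the product measure
  have hmapV : μ.map V = Measure.pi fun _ : Fin n => ν := by
    symm
    apply Measure.pi_eq
    intro s hs
    rw [Measure.map_apply hmeasV (MeasurableSet.univ_pi hs)]
    set st : ℕ → Set ℝ := fun i => if h : i < n then s ⟨i, h⟩ else Set.univ with hst
    have hstm : ∀ i, MeasurableSet (st i) := by
      intro i
      rw [hst]
      dsimp only
      split
      · exact hs _
      · exact MeasurableSet.univ
    have hpre : V ⁻¹' Set.pi Set.univ s = ⋂ i ∈ Finset.range n, ζ i ⁻¹' st i := by
      ext ω
      simp only [Set.mem_preimage, Set.mem_pi, Set.mem_univ, forall_true_left, Set.mem_iInter,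
        Finset.mem_range, hst, hV]
      constructor
      · intro h i hi
        simp only [Set.mem_preimage, dif_pos hi]
        exact h ⟨i, hi⟩
      · intro h j
        have := h j j.isLt
        simp only [Set.mem_preimage, dif_pos j.isLt] at this
        simpa using this
    rw [hpre, hindep.measure_inter_preimage_eq_mul (Finset.range n) (fun i _ => hstm i)]
    rw [Finset.prod_congr rfl (fun i (_ : i ∈ Finset.range n) =>
      show μ (ζ i ⁻¹' st i) = ν (st i) by
        rw [← hident i, Measure.map_apply (hmeas i) (hstm i)])]
    rw [← Fin.prod_univ_eq_prod_range (fun i => ν (st i)) n]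
    refine Finset.prod_congr rfl fun j _ => ?_
    simp only [hst, dif_pos j.isLt]
  -- pointwise identification with the abstract functions
  have hSw : ∀ ω, ∀ i ≤ n, S i ω = w n (V ω) i := by
    intro ω i hi
    rw [hS]
    unfold Stmt4Aux.w
    refine Finset.sum_congr rfl fun j hj => ?_
    rw [Finset.mem_range] at hj
    rw [dif_pos (by omega : j < n)]
  have hsigV : ∀ ω, σ ω = sig n (V ω) := by
    intro ω
    rw [hσ]
    unfold Stmt4Aux.sig
    have hseteq : {i | i ≤ n ∧ S i ω ≤ 0} = {i | i ≤ n ∧ w n (V ω) i ≤ 0} := by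
      ext i
      simp only [Set.mem_setOf_eq]
      constructor
      · rintro ⟨h1, h2⟩
        exact ⟨h1, by rw [← hSw ω i h1]; exact h2⟩
      · rintro ⟨h1, h2⟩
        exact ⟨h1, by rw [hSw ω i h1]; exact h2⟩
    rw [hseteq]
  have hσn : ∀ ω, σ ω ≤ n := fun ω => by rw [hsigV]; exact sig_le n (V ω)
  have himg : ∀ ω, (fun j => S j ω) '' Set.Iic (σ ω) = (w n (V ω)) '' Set.Iic (σ ω) := by
    intro ω
    exact Set.image_congr fun j hj => hSw ω j (le_trans (Set.mem_Iic.1 hj) (hσn ω))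
  have hFV : F = Ff n ∘ V := by
    funext ω
    rw [hF]
    simp only [Function.comp_apply]
    unfold Stmt4Aux.Ff
    rw [← hsigV ω, ← himg ω]
    have hseteq : {i | i ≤ σ ω ∧ S i ω = sInf ((fun j => S j ω) '' Set.Iic (σ ω))} =
        {i | i ≤ σ ω ∧ w n (V ω) i = sInf ((fun j => S j ω) '' Set.Iic (σ ω))} := by
      ext i
      simp only [Set.mem_setOf_eq]
      constructor
      · rintro ⟨h1, h2⟩
        exact ⟨h1, by rw [← hSw ω i (le_trans h1 (hσn ω))]; exact h2⟩
      · rintro ⟨h1, h2⟩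
        exact ⟨h1, by rw [hSw ω i (le_trans h1 (hσn ω))]; exact h2⟩
    rw [hseteq]
  have hGV : G' = Gg n ∘ V := by
    funext ω
    rw [hG']
    simp only [Function.comp_apply]
    unfold Stmt4Aux.Gg
    rw [← hsigV ω, ← himg ω]
    have hseteq : {i | i ≤ σ ω ∧ S i ω = sSup ((fun j => S j ω) '' Set.Iic (σ ω))} =
        {i | i ≤ σ ω ∧ w n (V ω) i = sSup ((fun j => S j ω) '' Set.Iic (σ ω))} := by
      ext i
      simp only [Set.mem_setOf_eq]
      constructor
      · rintro ⟨h1, h2⟩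
        exact ⟨h1, by rw [← hSw ω i (le_trans h1 (hσn ω))]; exact h2⟩
      · rintro ⟨h1, h2⟩
        exact ⟨h1, by rw [hSw ω i (le_trans h1 (hσn ω))]; exact h2⟩
    rw [hseteq]
  -- assemble
  have hGF : Gg n = Ff n ∘ R n := by
    funext x
    exact (Ff_rev n x).symm
  calc μ.map F = (μ.map V).map (Ff n) := by
        rw [hFV, ← Measure.map_map (measurable_Ff n) hmeasV]
    _ = (Measure.pi fun _ : Fin n => ν).map (Ff n) := by rw [hmapV]
    _ = (Measure.pi fun _ : Fin n => ν).map (Gg n) := by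
        rw [hGF, ← Measure.map_map (measurable_Ff n) (measurable_R n), map_R_eq n ν]
    _ = (μ.map V).map (Gg n) := by rw [hmapV]
    _ = μ.map G' := by rw [hGV, Measure.map_map (measurable_Gg n) hmeasV]
end

section
/- Let ζ₁,…,ζₙ be i.i.d. real random variables, S_i the random walk, σ = max{i ≤ n : S_i ≤ 0}, S̲ = min{S_i : i ≤ σ}, S̄ = max{S_i : i ≤ σ}. Define ←F = σ − min{i ≤ σ : S_i = S̲} and →G = max{i ≤ σ : S_i = S̄}. Then ←F and →G have the same distribution. -/
open MeasureTheory ProbabilityTheory Finset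

namespace Stmt5Aux

noncomputable def pS (x : ℕ → ℝ) (i : ℕ) : ℝ := ∑ j ∈ Finset.range i, x j

noncomputable def psig (n : ℕ) (x : ℕ → ℝ) : ℕ := sSup {i | i ≤ n ∧ pS x i ≤ 0}

noncomputable def pF (n : ℕ) (x : ℕ → ℝ) : ℕ :=
  psig n x - sInf {i | i ≤ psig n x ∧ pS x i = sInf (pS x '' Set.Iic (psig n x))}

noncomputable def pG (n : ℕ) (x : ℕ → ℝ) : ℕ :=
  sSup {i | i ≤ psig n x ∧ pS x i = sSup (pS x '' Set.Iic (psig n x))}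

lemma pS_zero (x : ℕ → ℝ) : pS x 0 = 0 := by simp [pS]

lemma psigSet_mem (n : ℕ) (x : ℕ → ℝ) :
    psig n x ∈ {i | i ≤ n ∧ pS x i ≤ 0} := by
  apply Nat.sSup_mem
  · exact ⟨0, by simp [pS_zero]⟩
  · exact ⟨n, fun i hi => hi.1⟩

lemma psig_le (n : ℕ) (x : ℕ → ℝ) : psig n x ≤ n := (psigSet_mem n x).1

lemma pS_psig_le (n : ℕ) (x : ℕ → ℝ) : pS x (psig n x) ≤ 0 := (psigSet_mem n x).2

lemma le_psig (n : ℕ) (x : ℕ → ℝ) {i : ℕ} (h1 : i ≤ n) (h2 : pS x i ≤ 0) :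
    i ≤ psig n x :=
  le_csSup ⟨n, fun j hj => hj.1⟩ ⟨h1, h2⟩

lemma psig_eq (n : ℕ) (x : ℕ → ℝ) {k : ℕ} (hk1 : k ≤ n) (hk2 : pS x k ≤ 0)
    (hub : ∀ i, i ≤ n → pS x i ≤ 0 → i ≤ k) : psig n x = k := by
  refine le_antisymm ?_ (le_psig n x hk1 hk2)
  exact csSup_le ⟨0, by simp [pS_zero]⟩ (fun i hi => hub i hi.1 hi.2)

/-- characterization of being a minimizer -/
lemma eq_sInf_iff (x : ℕ → ℝ) (k i : ℕ) (hik : i ≤ k) :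
    pS x i = sInf (pS x '' Set.Iic k) ↔ ∀ j ≤ k, pS x i ≤ pS x j := by
  have hfin : (pS x '' Set.Iic k).Finite := (Set.finite_Iic k).image _
  have hne : (pS x '' Set.Iic k).Nonempty := ⟨pS x 0, ⟨0, by simp, rfl⟩⟩
  constructor
  · intro h j hj
    rw [h]
    exact csInf_le hfin.bddBelow ⟨j, hj, rfl⟩
  · intro h
    refine le_antisymm ?_ ?_
    · obtain ⟨j, hj, hje⟩ := hne.csInf_mem hfin
      rw [← hje]; exact h j hj
    · exact csInf_le hfin.bddBelow ⟨i, hik, rfl⟩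

lemma eq_sSup_iff (x : ℕ → ℝ) (k i : ℕ) (hik : i ≤ k) :
    pS x i = sSup (pS x '' Set.Iic k) ↔ ∀ j ≤ k, pS x j ≤ pS x i := by
  have hfin : (pS x '' Set.Iic k).Finite := (Set.finite_Iic k).image _
  have hne : (pS x '' Set.Iic k).Nonempty := ⟨pS x 0, ⟨0, by simp, rfl⟩⟩
  constructor
  · intro h j hj
    rw [h]
    exact le_csSup hfin.bddAbove ⟨j, hj, rfl⟩
  · intro h
    refine le_antisymm ?_ ?_
    · exact le_csSup hfin.bddAbove ⟨i, hik, rfl⟩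
    · obtain ⟨j, hj, hje⟩ := hne.csSup_mem hfin
      rw [← hje]; exact h j hj

/-- everything is determined by comparisons of partial sums (indices ≤ n) -/
lemma determined (n : ℕ) {x y : ℕ → ℝ}
    (hle : ∀ i j, i ≤ n → j ≤ n → (pS x i ≤ pS x j ↔ pS y i ≤ pS y j))
    (h0 : ∀ i, i ≤ n → (pS x i ≤ 0 ↔ pS y i ≤ 0)) :
    psig n x = psig n y ∧ pF n x = pF n y ∧ pG n x = pG n y := by
  have hsig : psig n x = psig n y := by
    have : {i | i ≤ n ∧ pS x i ≤ 0} = {i | i ≤ n ∧ pS y i ≤ 0} := by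
      ext i; simp only [Set.mem_setOf_eq]
      exact and_congr_right fun hi => h0 i hi
    unfold psig; rw [this]
  set k := psig n x with hk
  have hkn : k ≤ n := psig_le n x
  refine ⟨hsig, ?_, ?_⟩
  · have : {i | i ≤ psig n x ∧ pS x i = sInf (pS x '' Set.Iic (psig n x))}
        = {i | i ≤ psig n y ∧ pS y i = sInf (pS y '' Set.Iic (psig n y))} := by
      rw [← hsig]
      ext i; simp only [Set.mem_setOf_eq]
      refine and_congr_right fun hi => ?_
      rw [eq_sInf_iff x k i hi, eq_sInf_iff y k i hi]
      exact forall₂_congr fun j hj => hle i j (hi.trans hkn) (hj.trans hkn)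
    unfold pF; rw [this, show psig n x = psig n y from hsig]
  · have : {i | i ≤ psig n x ∧ pS x i = sSup (pS x '' Set.Iic (psig n x))}
        = {i | i ≤ psig n y ∧ pS y i = sSup (pS y '' Set.Iic (psig n y))} := by
      rw [← hsig]
      ext i; simp only [Set.mem_setOf_eq]
      refine and_congr_right fun hi => ?_
      rw [eq_sSup_iff x k i hi, eq_sSup_iff y k i hi]
      exact forall₂_congr fun j hj => hle j i (hj.trans hkn) (hi.trans hkn)
    unfold pG; rw [this]

lemma congr_of_pS_eq (n : ℕ) {x y : ℕ → ℝ} (h : ∀ i ≤ n, pS x i = pS y i) :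
    psig n x = psig n y ∧ pF n x = pF n y ∧ pG n x = pG n y :=
  determined n (fun i j hi hj => by rw [h i hi, h j hj]) (fun i hi => by rw [h i hi])


def revP (k j : ℕ) : ℕ := if j < k then k - 1 - j else j

lemma revP_invol (k : ℕ) : Function.Involutive (revP k) := by
  intro j
  unfold revP
  by_cases h : j < k
  · simp only [h, if_pos, if_true]
    have h2 : k - 1 - j < k := by omega
    rw [if_pos h2]; omega
  · rw [if_neg h, if_neg h]

lemma pS_rev_le (x : ℕ → ℝ) (k i : ℕ) (hik : i ≤ k) :
    pS (x ∘ revP k) i = pS x k - pS x (k - i) := by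
  unfold pS
  have h1 : ∀ j ∈ Finset.range i, (x ∘ revP k) j = x ((k - i) + (i - 1 - j)) := by
    intro j hj
    rw [Finset.mem_range] at hj
    simp only [Function.comp_apply, revP]
    rw [if_pos (by omega)]
    congr 1; omega
  rw [Finset.sum_congr rfl h1]
  rw [Finset.sum_range_reflect (fun t => x ((k - i) + t)) i]
  have h2 : ∑ j ∈ Finset.range i, x ((k - i) + j) = ∑ j ∈ Finset.Ico (k - i) k, x j := by
    rw [Finset.sum_Ico_eq_sum_range]
    have : k - (k - i) = i := by omega
    rw [this]
  rw [h2, Finset.sum_Ico_eq_sub _ (by omega : k - i ≤ k)]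

lemma pS_rev_ge (x : ℕ → ℝ) (k i : ℕ) (hki : k ≤ i) :
    pS (x ∘ revP k) i = pS x i := by
  unfold pS
  rw [Finset.range_eq_Ico, ← Finset.sum_Ico_consecutive _ (Nat.zero_le k) hki,
    ← Finset.sum_Ico_consecutive (f := x) (Nat.zero_le k) hki]
  congr 1
  · have := pS_rev_le x k k le_rfl
    unfold pS at this
    simpa using this
  · apply Finset.sum_congr rfl
    intro j hj
    rw [Finset.mem_Ico] at hj
    simp only [Function.comp_apply, revP, if_neg (by omega : ¬ j < k)]

lemma psig_rev (n : ℕ) (x : ℕ → ℝ) {k : ℕ} (hk : psig n x = k) :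
    psig n (x ∘ revP k) = k := by
  have hkn : k ≤ n := hk ▸ psig_le n x
  have hC : pS x k ≤ 0 := hk ▸ pS_psig_le n x
  refine psig_eq n _ hkn ?_ ?_
  · rw [pS_rev_le x k k le_rfl]
    simp [pS_zero]
    exact hC
  · intro i hin hi
    by_contra hikn
    push_neg at hikn
    rw [pS_rev_ge x k i (le_of_lt hikn)] at hi
    exact absurd (hk ▸ le_psig n x hin hi) (by omega)

lemma pG_rev (n : ℕ) (x : ℕ → ℝ) {k : ℕ} (hk : psig n x = k) :
    pG n (x ∘ revP k) = pF n x := by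
  have hkn : k ≤ n := hk ▸ psig_le n x
  set y := x ∘ revP k with hy
  set C := pS x k with hCdef
  set A := pS x '' Set.Iic k with hA
  have Afin : A.Finite := (Set.finite_Iic k).image _
  have Ane : A.Nonempty := ⟨pS x 0, ⟨0, by simp, rfl⟩⟩
  set m := sInf A with hm
  obtain ⟨i0, hi0k, hi0⟩ := Ane.csInf_mem Afin
  set Sx := {i | i ≤ k ∧ pS x i = m} with hSx
  have hSxne : Sx.Nonempty := ⟨i0, hi0k, hi0⟩
  set j0 := sInf Sx with hj0def
  have hj0 : j0 ∈ Sx := Nat.sInf_mem hSxne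
  have hj0k : j0 ≤ k := hj0.1
  -- value of pF
  have hpF : pF n x = k - j0 := by
    unfold pF
    rw [hk]
  -- image identity
  have himg : pS y '' Set.Iic k = (fun t => C - t) '' A := by
    ext t
    constructor
    · rintro ⟨i, hik, rfl⟩
      exact ⟨pS x (k - i), ⟨k - i, Set.mem_Iic.mpr (by omega), rfl⟩, (pS_rev_le x k i hik).symm⟩
    · rintro ⟨a, ⟨j, hjk, rfl⟩, rfl⟩
      refine ⟨k - j, Set.mem_Iic.mpr (by omega), ?_⟩
      rw [pS_rev_le x k (k - j) (by omega)]
      simp only [Set.mem_Iic] at hjk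
      congr 2
      omega
  have hsSup : sSup (pS y '' Set.Iic k) = C - m := by
    rw [himg]
    refine le_antisymm ?_ ?_
    · refine csSup_le (Ane.image _) ?_
      rintro b ⟨a, ha, rfl⟩
      have : m ≤ a := csInf_le Afin.bddBelow ha
      simp only
      linarith
    · refine le_csSup (Afin.image _).bddAbove ?_
      exact ⟨m, Ane.csInf_mem Afin, rfl⟩
  have hpsigy : psig n y = k := psig_rev n x hk
  have hset : {i | i ≤ psig n y ∧ pS y i = sSup (pS y '' Set.Iic (psig n y))}
      = {i | i ≤ k ∧ pS x (k - i) = m} := by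
    rw [hpsigy, hsSup]
    ext i
    simp only [Set.mem_setOf_eq]
    refine and_congr_right fun hik => ?_
    rw [pS_rev_le x k i hik]
    constructor
    · intro h; linarith
    · intro h; rw [h]
  have : pG n y = k - j0 := by
    unfold pG
    rw [hset]
    refine le_antisymm ?_ ?_
    · refine csSup_le ⟨k - j0, by omega, by rw [show k - (k - j0) = j0 by omega]; exact hj0.2⟩ ?_
      intro i hi
      have hi1 : i ≤ k := hi.1
      have h2 : k - i ∈ Sx := ⟨by omega, hi.2⟩
      have h3 : j0 ≤ k - i := Nat.sInf_le h2
      omega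
    · refine le_csSup ⟨k, fun i hi => hi.1⟩ ?_
      exact ⟨by omega, by rw [show k - (k - j0) = j0 by omega]; exact hj0.2⟩
  rw [this, hpF]

/-! ### padding -/

noncomputable def pad (n : ℕ) (y : Fin n → ℝ) (j : ℕ) : ℝ :=
  if h : j < n then y ⟨j, h⟩ else 0

lemma measurable_pad_apply (n j : ℕ) : Measurable fun y : Fin n → ℝ => pad n y j := by
  unfold pad
  split_ifs with h
  · exact measurable_pi_apply _
  · exact measurable_const

lemma measurable_pS_pad (n i : ℕ) : Measurable fun y : Fin n → ℝ => pS (pad n y) i := by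
  unfold pS
  exact Finset.measurable_sum _ fun j _ => measurable_pad_apply n j

lemma revP_lt (n k j : ℕ) (hkn : k ≤ n) (hj : j < n) : revP k j < n := by
  unfold revP; split_ifs <;> omega

/-- the permutation of `Fin n` reversing the first `k` coordinates -/
def ePerm (n k : ℕ) (hkn : k ≤ n) : Equiv.Perm (Fin n) :=
  Function.Involutive.toPerm (fun i => ⟨revP k i, revP_lt n k i hkn i.isLt⟩)
    (fun i => by
      ext
      exact revP_invol k i)

lemma pad_comp (n k : ℕ) (hkn : k ≤ n) (y : Fin n → ℝ) :
    pad n (y ∘ ePerm n k hkn) = pad n y ∘ revP k := by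
  funext j
  simp only [pad, Function.comp_apply]
  by_cases h : j < n
  · rw [dif_pos h, dif_pos (revP_lt n k j hkn h)]
    rfl
  · rw [dif_neg h, dif_neg (by unfold revP; split_ifs <;> omega)]

lemma pad_rev_rev (n k : ℕ) (y : Fin n → ℝ) :
    (pad n y ∘ revP k) ∘ revP k = pad n y := by
  funext j
  simp [Function.comp_apply, revP_invol k j]

/-! ### measurability via comparison data -/

noncomputable def cmpD (n : ℕ) (y : Fin n → ℝ) :
    (Fin (n+1) × Fin (n+1)) → Bool × Bool :=
  fun p => (decide (pS (pad n y) p.1 ≤ pS (pad n y) p.2), decide (pS (pad n y) p.1 ≤ 0))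

lemma measurable_decide {α : Type*} [MeasurableSpace α] {p : α → Prop} [DecidablePred p]
    (h : MeasurableSet {a | p a}) : Measurable (fun a => decide (p a)) := by
  apply measurable_to_countable'
  intro b
  cases b
  · convert h.compl using 1
    ext a; simp
  · convert h using 1
    ext a; simp

lemma measurable_cmpD (n : ℕ) : Measurable (cmpD n) := by
  apply measurable_pi_lambda
  intro p
  apply Measurable.prod
  · exact measurable_decide (measurableSet_le (measurable_pS_pad n p.1) (measurable_pS_pad n p.2))
  · exact measurable_decide (measurableSet_le (measurable_pS_pad n p.1) measurable_const)

lemma cmpD_determined (n : ℕ) {y y' : Fin n → ℝ} (h : cmpD n y = cmpD n y') :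
    psig n (pad n y) = psig n (pad n y') ∧ pF n (pad n y) = pF n (pad n y')
      ∧ pG n (pad n y) = pG n (pad n y') := by
  apply determined n
  · intro i j hi hj
    have h1 := congrArg Prod.fst (congrFun h (⟨i, by omega⟩, ⟨j, by omega⟩))
    simp only [cmpD] at h1
    exact decide_eq_decide.mp h1
  · intro i hi
    have h2 := congrArg Prod.snd (congrFun h (⟨i, by omega⟩, ⟨0, by omega⟩))
    simp only [cmpD] at h2
    exact decide_eq_decide.mp h2

lemma measurable_comp_pad (n : ℕ) (φ : (ℕ → ℝ) → ℕ)
    (hdet : ∀ y y' : Fin n → ℝ, cmpD n y = cmpD n y' → φ (pad n y) = φ (pad n y')) :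
    Measurable fun y : Fin n → ℝ => φ (pad n y) := by
  classical
  set Φ : ((Fin (n+1) × Fin (n+1)) → Bool × Bool) → ℕ :=
    fun d => if h : ∃ y : Fin n → ℝ, cmpD n y = d then φ (pad n h.choose) else 0 with hΦ
  have heq : (fun y : Fin n → ℝ => φ (pad n y)) = Φ ∘ cmpD n := by
    funext y
    have hex : ∃ y' : Fin n → ℝ, cmpD n y' = cmpD n y := ⟨y, rfl⟩
    simp only [Function.comp_apply, hΦ, dif_pos hex]
    exact (hdet hex.choose y hex.choose_spec).symm
  rw [heq]
  exact (measurable_of_countable Φ).comp (measurable_cmpD n)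

lemma measurable_psig_pad (n : ℕ) : Measurable fun y : Fin n → ℝ => psig n (pad n y) :=
  measurable_comp_pad n (psig n) fun y y' h => (cmpD_determined n h).1

lemma measurable_pF_pad (n : ℕ) : Measurable fun y : Fin n → ℝ => pF n (pad n y) :=
  measurable_comp_pad n (pF n) fun y y' h => (cmpD_determined n h).2.1

lemma measurable_pG_pad (n : ℕ) : Measurable fun y : Fin n → ℝ => pG n (pad n y) :=
  measurable_comp_pad n (pG n) fun y y' h => (cmpD_determined n h).2.2

/-! ### product measure invariance -/

lemma map_pi_comp_perm (n : ℕ) (m0 : Measure ℝ) [IsProbabilityMeasure m0]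
    (e : Equiv.Perm (Fin n)) :
    (Measure.pi fun _ : Fin n => m0).map (fun x => x ∘ e) = Measure.pi fun _ : Fin n => m0 := by
  refine (Measure.pi_eq fun s hs => ?_).symm
  have hmeas : Measurable fun x : Fin n → ℝ => x ∘ ⇑e :=
    measurable_pi_lambda _ fun i => measurable_pi_apply _
  rw [Measure.map_apply hmeas (MeasurableSet.univ_pi hs)]
  have hpre : (fun x : Fin n → ℝ => x ∘ ⇑e) ⁻¹' Set.pi Set.univ s
      = Set.pi Set.univ fun j => s (e.symm j) := by
    ext x
    simp only [Set.mem_preimage, Set.mem_pi, Set.mem_univ, forall_true_left,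
      Function.comp_apply]
    constructor
    · intro h j
      have := h (e.symm j)
      simpa using this
    · intro h i
      have := h (e i)
      simpa using this
  rw [hpre, Measure.pi_pi]
  exact Equiv.prod_comp e.symm fun i => m0 (s i)

/-- the main pure measure-theoretic identity -/
lemma map_pF_eq_map_pG (n : ℕ) (m0 : Measure ℝ) [IsProbabilityMeasure m0] :
    (Measure.pi fun _ : Fin n => m0).map (fun y => pF n (pad n y))
      = (Measure.pi fun _ : Fin n => m0).map (fun y => pG n (pad n y)) := by
  set ν := Measure.pi fun _ : Fin n => m0 with hν
  set sp : (Fin n → ℝ) → ℕ := fun y => psig n (pad n y) with hsp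
  have hspm : Measurable sp := measurable_psig_pad n
  have hfm : Measurable fun y : Fin n → ℝ => pF n (pad n y) := measurable_pF_pad n
  have hgm : Measurable fun y : Fin n → ℝ => pG n (pad n y) := measurable_pG_pad n
  apply Measure.ext
  intro A hA
  rw [Measure.map_apply hfm hA, Measure.map_apply hgm hA]
  have hpart : ∀ T : Set (Fin n → ℝ), MeasurableSet T →
      ν T = ∑ k ∈ Finset.range (n+1), ν (T ∩ sp ⁻¹' {k}) := by
    intro T hT
    have hcover : T = ⋃ k ∈ Finset.range (n+1), T ∩ sp ⁻¹' {k} := by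
      ext y
      simp only [Set.mem_iUnion, Set.mem_inter_iff, Set.mem_preimage, Set.mem_singleton_iff,
        Finset.mem_range, exists_prop]
      constructor
      · intro hy
        exact ⟨sp y, Nat.lt_succ_of_le (psig_le n (pad n y)), hy, rfl⟩
      · rintro ⟨k, _, hy, _⟩
        exact hy
    rw [hcover, measure_biUnion_finset ?_ ?_]
    · congr 1
      funext k
      congr 1
      rw [← hcover]
    · intro k _ l _ hkl
      refine Set.disjoint_left.mpr ?_
      rintro y ⟨_, hyk⟩ ⟨_, hyl⟩
      exact hkl (hyk.symm.trans hyl)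
    · intro k _
      exact hT.inter (hspm (measurableSet_singleton k))
  rw [hpart _ (hfm hA), hpart _ (hgm hA)]
  apply Finset.sum_congr rfl
  intro k hk
  have hkn : k ≤ n := by
    rw [Finset.mem_range] at hk; omega
  set e := ePerm n k hkn with he
  have hmpe : Measurable fun x : Fin n → ℝ => x ∘ ⇑e :=
    measurable_pi_lambda _ fun i => measurable_pi_apply _
  have hinv : ν.map (fun x : Fin n → ℝ => x ∘ ⇑e) = ν := map_pi_comp_perm n m0 e
  have hTm : MeasurableSet ((fun y => pG n (pad n y)) ⁻¹' A ∩ sp ⁻¹' {k}) :=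
    (hgm hA).inter (hspm (measurableSet_singleton k))
  have hsetid : (fun x : Fin n → ℝ => x ∘ ⇑e) ⁻¹'
        ((fun y => pG n (pad n y)) ⁻¹' A ∩ sp ⁻¹' {k})
      = (fun y => pF n (pad n y)) ⁻¹' A ∩ sp ⁻¹' {k} := by
    ext y
    simp only [Set.mem_preimage, Set.mem_inter_iff, Set.mem_singleton_iff, hsp]
    rw [pad_comp n k hkn y]
    constructor
    · rintro ⟨hG, hsig⟩
      have hpady : psig n (pad n y) = k := by
        have h1 := psig_rev n (pad n y ∘ revP k) hsig
        rwa [pad_rev_rev n k y] at h1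
      refine ⟨?_, hpady⟩
      have h2 := pG_rev n (pad n y) hpady
      rwa [h2] at hG
    · rintro ⟨hF, hsig⟩
      exact ⟨by rwa [pG_rev n (pad n y) hsig], psig_rev n (pad n y) hsig⟩
  calc ν ((fun y => pF n (pad n y)) ⁻¹' A ∩ sp ⁻¹' {k})
      = ν ((fun x : Fin n → ℝ => x ∘ ⇑e) ⁻¹'
          ((fun y => pG n (pad n y)) ⁻¹' A ∩ sp ⁻¹' {k})) := by rw [hsetid]
    _ = (ν.map (fun x : Fin n → ℝ => x ∘ ⇑e))
          ((fun y => pG n (pad n y)) ⁻¹' A ∩ sp ⁻¹' {k}) := by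
        rw [Measure.map_apply hmpe hTm]
    _ = ν ((fun y => pG n (pad n y)) ⁻¹' A ∩ sp ⁻¹' {k}) := by rw [hinv]


lemma map_vec_eq_pi {Ω : Type*} [MeasurableSpace Ω] (μ : Measure Ω) [IsProbabilityMeasure μ]
    (n : ℕ) (ζ : ℕ → Ω → ℝ) (hmeas : ∀ i, Measurable (ζ i))
    (hindep : ProbabilityTheory.iIndepFun ζ μ)
    (hident : ∀ i, μ.map (ζ i) = μ.map (ζ 0)) :
    μ.map (fun ω (i : Fin n) => ζ i ω) = Measure.pi fun _ : Fin n => μ.map (ζ 0) := by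
  haveI : IsProbabilityMeasure (μ.map (ζ 0)) :=
    Measure.isProbabilityMeasure_map (hmeas 0).aemeasurable
  refine (Measure.pi_eq fun s hs => ?_).symm
  have hE : Measurable fun ω (i : Fin n) => ζ i ω :=
    measurable_pi_lambda _ fun i => hmeas i
  rw [Measure.map_apply hE (MeasurableSet.univ_pi hs)]
  classical
  set s' : ℕ → Set ℝ := fun j => if h : j < n then s ⟨j, h⟩ else Set.univ with hs'
  have hs'm : ∀ j, MeasurableSet (s' j) := by
    intro j
    simp only [hs']
    split_ifs with h
    · exact hs _
    · exact MeasurableSet.univ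
  have hpre : (fun ω (i : Fin n) => ζ i ω) ⁻¹' Set.pi Set.univ s
      = ⋂ j ∈ Finset.range n, ζ j ⁻¹' s' j := by
    ext ω
    simp only [Set.mem_preimage, Set.mem_pi, Set.mem_univ, forall_true_left, Set.mem_iInter,
      Finset.mem_range]
    constructor
    · intro h j hj
      simp only [hs', dif_pos hj]
      exact h ⟨j, hj⟩
    · intro h i
      have := h i.val i.isLt
      simpa only [hs', dif_pos i.isLt, Fin.eta] using this
  rw [hpre, hindep.measure_inter_preimage_eq_mul (Finset.range n) (fun j _ => hs'm j)]
  have hterm : ∀ j, μ (ζ j ⁻¹' s' j) = (μ.map (ζ 0)) (s' j) := by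
    intro j
    rw [← hident j, Measure.map_apply (hmeas j) (hs'm j)]
  calc ∏ j ∈ Finset.range n, μ (ζ j ⁻¹' s' j)
      = ∏ j ∈ Finset.range n, (μ.map (ζ 0)) (s' j) :=
        Finset.prod_congr rfl fun j _ => hterm j
    _ = ∏ i : Fin n, (μ.map (ζ 0)) (s' i.val) :=
        (Fin.prod_univ_eq_prod_range (fun j => (μ.map (ζ 0)) (s' j)) n).symm
    _ = ∏ i : Fin n, (μ.map (ζ 0)) (s i) := by
        apply Finset.prod_congr rfl
        intro i _
        congr 1
        simp only [hs', dif_pos i.isLt, Fin.eta]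


end Stmt5Aux

open Stmt5Aux in
/-- ←F = σ − min{i ≤ σ : S_i = min_{j ≤ σ} S_j} and →G = max{i ≤ σ : S_i = max_{j ≤ σ} S_j}
have the same distribution. -/
theorem stmt_5 {Ω : Type*} [MeasurableSpace Ω] (μ : Measure Ω) [IsProbabilityMeasure μ]
    (n : ℕ) (ζ : ℕ → Ω → ℝ)
    (hmeas : ∀ i, Measurable (ζ i))
    (hindep : ProbabilityTheory.iIndepFun ζ μ)
    (hident : ∀ i, μ.map (ζ i) = μ.map (ζ 0))
    (S : ℕ → Ω → ℝ) (hS : ∀ i ω, S i ω = ∑ j ∈ Finset.range i, ζ j ω)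
    (σ : Ω → ℕ) (hσ : ∀ ω, σ ω = sSup {i | i ≤ n ∧ S i ω ≤ 0})
    (F' G : Ω → ℕ)
    (hF' : ∀ ω, F' ω =
      σ ω - sInf {i | i ≤ σ ω ∧ S i ω = sInf ((fun j => S j ω) '' Set.Iic (σ ω))})
    (hG : ∀ ω, G ω = sSup {i | i ≤ σ ω ∧ S i ω = sSup ((fun j => S j ω) '' Set.Iic (σ ω))}) :
    μ.map F' = μ.map G := by
  haveI : IsProbabilityMeasure (μ.map (ζ 0)) :=
    Measure.isProbabilityMeasure_map (hmeas 0).aemeasurable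
  set E : Ω → (Fin n → ℝ) := fun ω i => ζ i ω with hE
  have hEm : Measurable E := measurable_pi_lambda _ fun i => hmeas i
  -- pointwise identification
  have hkey : ∀ ω, F' ω = pF n (pad n (E ω)) ∧ G ω = pG n (pad n (E ω)) := by
    intro ω
    set z : ℕ → ℝ := fun j => ζ j ω with hz
    have hSz : (fun j => S j ω) = pS z := funext fun i => hS i ω
    have hσz : σ ω = psig n z := by
      rw [hσ]
      unfold psig
      congr 1
      ext i
      simp only [Set.mem_setOf_eq]
      rw [show S i ω = pS z i from hS i ω]
    have hcongr := congr_of_pS_eq n (x := z) (y := pad n (E ω)) ?_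
    · constructor
      · rw [hF', hσz]
        simp only [show ∀ i, S i ω = pS z i from fun i => hS i ω]
        exact hcongr.2.1
      · rw [hG, hσz]
        simp only [show ∀ i, S i ω = pS z i from fun i => hS i ω]
        exact hcongr.2.2
    · intro i hi
      unfold pS
      apply Finset.sum_congr rfl
      intro j hj
      rw [Finset.mem_range] at hj
      simp only [pad, hE, hz, dif_pos (lt_of_lt_of_le hj hi)]
  have hF'eq : F' = (fun y => pF n (pad n y)) ∘ E := funext fun ω => (hkey ω).1
  have hGeq : G = (fun y => pG n (pad n y)) ∘ E := funext fun ω => (hkey ω).2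
  rw [hF'eq, hGeq, ← Measure.map_map (measurable_pF_pad n) hEm,
    ← Measure.map_map (measurable_pG_pad n) hEm,
    map_vec_eq_pi μ n ζ hmeas hindep hident]
  exact map_pF_eq_map_pG n (μ.map (ζ 0))
end

section
/- Let ζ₁,…,ζₙ be exchangeable real random variables with partial sums S_i = ζ₁+⋯+ζ_i, S_0 = 0. Then the number of nonpositive partial sums N⁻ = Σ_{i=1}^n 1{S_i ≤ 0} and the last time of the minimum →F = max{i ≤ n : S_i = min_{0≤j≤n} S_j} have the same distribution (Sparre-Andersen identity). -/
open Finset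

namespace SA

noncomputable section

def psum (x : ℕ → ℝ) (i : ℕ) : ℝ := ∑ j ∈ Finset.range i, x j

def patt (n : ℕ) (x : ℕ → ℝ) : Finset ℕ :=
  (range n).filter (fun j => psum x (j+1) ≤ 0)

lemma patt_subset (n : ℕ) (x : ℕ → ℝ) : patt n x ⊆ range n := filter_subset _ _

def rk (p : Finset ℕ) (j : ℕ) : ℕ := (p.filter (· < j)).card

def tauf (n : ℕ) (p : Finset ℕ) (j : ℕ) : ℕ :=
  if j ∈ p then p.card - 1 - rk p j else if j < n then p.card + rk ((range n) \ p) j else j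

lemma rk_zero (p : Finset ℕ) : rk p 0 = 0 := by
  simp [rk]

lemma rk_le (p : Finset ℕ) (j : ℕ) : rk p j ≤ j := by
  have : p.filter (· < j) ⊆ range j := by
    intro a ha; simp only [mem_filter] at ha; exact mem_range.mpr ha.2
  simpa [rk] using (card_le_card this).trans_eq (card_range j)

lemma rk_le_card (p : Finset ℕ) (j : ℕ) : rk p j ≤ p.card :=
  card_le_card (filter_subset _ _)

lemma rk_lt_card {p : Finset ℕ} {j : ℕ} (hj : j ∈ p) : rk p j < p.card := by
  apply card_lt_card
  refine ⟨filter_subset _ _, fun h => ?_⟩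
  have := h hj
  simp only [mem_filter] at this
  omega

lemma rk_lt_rk {p : Finset ℕ} {i j : ℕ} (hi : i ∈ p) (hij : i < j) : rk p i < rk p j := by
  apply card_lt_card
  constructor
  · intro a ha
    simp only [mem_filter] at ha ⊢
    exact ⟨ha.1, by omega⟩
  · intro h
    have := h (by simp only [mem_filter]; exact ⟨hi, hij⟩)
    simp only [mem_filter] at this
    omega

lemma rk_mono (p : Finset ℕ) {i j : ℕ} (hij : i ≤ j) : rk p i ≤ rk p j :=
  card_le_card (fun a ha => by simp only [mem_filter] at ha ⊢; exact ⟨ha.1, by omega⟩)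

lemma rk_inj {p : Finset ℕ} {i j : ℕ} (hi : i ∈ p) (hj : j ∈ p) (h : rk p i = rk p j) : i = j := by
  rcases lt_trichotomy i j with h' | h' | h'
  · exact absurd h (rk_lt_rk hi h').ne
  · exact h'
  · exact absurd h.symm (rk_lt_rk hj h').ne

lemma exists_rk_eq {p : Finset ℕ} {r : ℕ} (hr : r < p.card) : ∃ j ∈ p, rk p j = r := by
  have himg : p.image (rk p) = range p.card := by
    apply eq_of_subset_of_card_le
    · intro a ha
      simp only [mem_image] at ha
      obtain ⟨j, hj, rfl⟩ := ha
      exact mem_range.mpr (rk_lt_card hj)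
    · rw [card_range, card_image_of_injOn (fun i hi j hj h => rk_inj hi hj h)]
  have : r ∈ p.image (rk p) := by rw [himg]; exact mem_range.mpr hr
  simpa only [mem_image] using this

/-- rank-cutoff: the set of elements of `p` of rank `< r` is a cutoff set. -/
lemma rk_cutoff {n : ℕ} {p : Finset ℕ} (hp : p ⊆ range n) {r : ℕ} (hr : r ≤ p.card) :
    ∃ J ≤ n, p.filter (fun j => rk p j < r) = p.filter (· < J) := by
  rcases Nat.eq_zero_or_pos r with rfl | hrpos
  · refine ⟨0, Nat.zero_le n, ?_⟩
    ext a
    simp [mem_filter]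
  · obtain ⟨j', hj'p, hj'⟩ := exists_rk_eq (show r - 1 < p.card by omega)
    refine ⟨j' + 1, by have := hp hj'p; simp only [mem_range] at this; omega, ?_⟩
    apply filter_congr
    intro j hj
    constructor
    · intro h
      by_contra hc
      have : j' < j := by omega
      have := rk_lt_rk hj'p this
      omega
    · intro h
      have : j ≤ j' := by omega
      rcases eq_or_lt_of_le this with rfl | h'
      · omega
      · have := rk_lt_rk hj h'
        omega

lemma tauf_lt {n : ℕ} {p : Finset ℕ} (hp : p ⊆ range n) {j : ℕ} (hj : j < n) :
    tauf n p j < n := by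
  have hcard : p.card ≤ n := by simpa using card_le_card hp
  unfold tauf
  by_cases hjp : j ∈ p
  · simp only [hjp, if_true]
    have h1 : rk p j < p.card := rk_lt_card hjp
    omega
  · simp only [hjp, if_false, hj, if_true]
    have hjc : j ∈ (range n) \ p := by simp [mem_sdiff, mem_range, hj, hjp]
    have h1 : rk ((range n) \ p) j < ((range n) \ p).card := rk_lt_card hjc
    have h2 : ((range n) \ p).card = n - p.card := by
      rw [card_sdiff_of_subset hp, card_range]
    omega

lemma tauf_injOn {n : ℕ} {p : Finset ℕ} (hp : p ⊆ range n) {j1 j2 : ℕ}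
    (h1 : j1 < n) (h2 : j2 < n) (h : tauf n p j1 = tauf n p j2) : j1 = j2 := by
  unfold tauf at h
  by_cases hp1 : j1 ∈ p <;> by_cases hp2 : j2 ∈ p
  · simp only [hp1, hp2, if_true] at h
    have r1 := rk_lt_card hp1
    have r2 := rk_lt_card hp2
    exact rk_inj hp1 hp2 (by omega)
  · simp only [hp1, hp2, if_true, if_false, h2, if_true] at h
    have r1 := rk_lt_card hp1
    omega
  · simp only [hp1, hp2, if_true, if_false, h1, if_true] at h
    have r2 := rk_lt_card hp2
    omega
  · simp only [hp1, hp2, if_false, h1, h2, if_true] at h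
    have hc1 : j1 ∈ (range n) \ p := by simp [mem_sdiff, mem_range, h1, hp1]
    have hc2 : j2 ∈ (range n) \ p := by simp [mem_sdiff, mem_range, h2, hp2]
    exact rk_inj hc1 hc2 (by omega)

lemma tauf_id {n : ℕ} {p : Finset ℕ} (hp : p ⊆ range n) {j : ℕ} (hj : n ≤ j) :
    tauf n p j = j := by
  have hjp : j ∉ p := fun h => by have := hp h; simp only [mem_range] at this; omega
  simp [tauf, hjp, Nat.not_lt.mpr hj]

lemma rk_add_rk {n : ℕ} {p : Finset ℕ} (hp : p ⊆ range n) {i : ℕ} (hi : i ≤ n) :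
    rk p i + rk ((range n) \ p) i = i := by
  unfold rk
  have hdisj : Disjoint (p.filter (· < i)) (((range n) \ p).filter (· < i)) :=
    disjoint_filter_filter disjoint_sdiff
  have hunion : p.filter (· < i) ∪ ((range n) \ p).filter (· < i) = range i := by
    ext a
    simp only [mem_union, mem_filter, mem_sdiff, mem_range]
    constructor
    · rintro (⟨_, h⟩ | ⟨⟨_, _⟩, h⟩) <;> exact h
    · intro ha
      by_cases hap : a ∈ p
      · exact Or.inl ⟨hap, ha⟩
      · exact Or.inr ⟨⟨by omega, hap⟩, ha⟩
  rw [← card_union_of_disjoint hdisj, hunion, card_range]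

lemma rk_succ {p : Finset ℕ} (i : ℕ) :
    rk p (i+1) = rk p i + (if i ∈ p then 1 else 0) := by
  unfold rk
  by_cases hip : i ∈ p
  · simp only [hip, if_true]
    have : p.filter (· < i + 1) = insert i (p.filter (· < i)) := by
      ext a
      simp only [mem_insert, mem_filter]
      constructor
      · rintro ⟨ha, h⟩
        rcases Nat.lt_succ_iff_lt_or_eq.mp h with h' | rfl
        · exact Or.inr ⟨ha, h'⟩
        · exact Or.inl rfl
      · rintro (rfl | ⟨ha, h⟩)
        · exact ⟨hip, by omega⟩
        · exact ⟨ha, by omega⟩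
    rw [this, card_insert_of_notMem (by simp)]
  · simp only [hip, if_false, add_zero]
    congr 1
    apply filter_congr
    intro a ha
    constructor
    · intro h
      rcases Nat.lt_succ_iff_lt_or_eq.mp h with h' | rfl
      · exact h'
      · exact absurd ha hip
    · omega

/-- image of an initial segment under `tauf` is an interval -/
lemma image_tauf_range {n : ℕ} {p : Finset ℕ} (hp : p ⊆ range n) :
    ∀ i ≤ n, (range i).image (tauf n p) =
      Ico (p.card - rk p i) (p.card + (i - rk p i)) := by
  intro i
  induction i with
  | zero => intro _; simp [rk_zero, Ico_self]
  | succ i ih =>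
    intro hi
    have hin : i < n := hi
    have ihh := ih (by omega)
    rw [range_add_one, image_insert, ihh]
    have hrki : rk p i ≤ i := rk_le p i
    have hrkc : rk p i ≤ p.card := rk_le_card p i
    by_cases hip : i ∈ p
    · have hlt : rk p i < p.card := rk_lt_card hip
      have htau : tauf n p i = p.card - 1 - rk p i := by simp [tauf, hip]
      rw [htau, rk_succ]
      simp only [hip, if_true]
      ext a
      simp only [mem_insert, mem_Ico]
      omega
    · have htau : tauf n p i = p.card + rk ((range n) \ p) i := by
        simp [tauf, hip, hin]
      have hcc : rk ((range n) \ p) i = i - rk p i := by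
        have := rk_add_rk hp (le_of_lt hin)
        omega
      rw [htau, rk_succ, hcc]
      simp only [hip, if_false, add_zero]
      ext a
      simp only [mem_insert, mem_Ico]
      omega

lemma psum_comp_tauf {n : ℕ} {p : Finset ℕ} (hp : p ⊆ range n) (x : ℕ → ℝ) {i : ℕ} (hi : i ≤ n) :
    psum (fun m => x (tauf n p m)) i =
      ∑ j ∈ Ico (p.card - rk p i) (p.card + (i - rk p i)), x j := by
  rw [← image_tauf_range hp i hi, sum_image]
  · rfl
  · intro a ha b hb hab
    simp only [mem_coe, mem_range] at ha hb
    exact tauf_injOn hp (by omega) (by omega) hab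

def cond (n : ℕ) (x : ℕ → ℝ) (p : Finset ℕ) : Prop :=
  ∀ j < n, ((∑ i ∈ Ico (p.card - rk p (j+1)) (p.card + (j+1 - rk p (j+1))), x i) ≤ 0 ↔ j ∈ p)

lemma patt_comp_iff_cond {n : ℕ} {p : Finset ℕ} (hp : p ⊆ range n) (x : ℕ → ℝ) :
    patt n (fun m => x (tauf n p m)) = p ↔ cond n x p := by
  constructor
  · intro h j hj
    rw [← psum_comp_tauf hp x (show j + 1 ≤ n by omega)]
    constructor
    · intro hle
      rw [← h]
      simp only [patt, mem_filter, mem_range]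
      exact ⟨hj, hle⟩
    · intro hjp
      rw [← h] at hjp
      simp only [patt, mem_filter] at hjp
      exact hjp.2
  · intro h
    ext j
    simp only [patt, mem_filter, mem_range]
    constructor
    · rintro ⟨hj, hle⟩
      rw [psum_comp_tauf hp x (show j + 1 ≤ n by omega)] at hle
      exact (h j hj).mp hle
    · intro hjp
      have hj : j < n := by have := hp hjp; simpa using this
      refine ⟨hj, ?_⟩
      rw [psum_comp_tauf hp x (show j + 1 ≤ n by omega)]
      exact (h j hj).mpr hjp

lemma rk_full {n : ℕ} {p : Finset ℕ} (hp : p ⊆ range n) : rk p n = p.card := by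
  unfold rk
  congr 1
  apply filter_true_of_mem
  intro a ha
  simpa using hp ha

lemma rk_erase_top {n : ℕ} {p : Finset ℕ} {j : ℕ} (hj : j ≤ n) :
    rk (p.erase n) j = rk p j := by
  unfold rk
  congr 1
  ext a
  simp only [mem_filter, mem_erase]
  constructor
  · rintro ⟨⟨_, ha⟩, h⟩; exact ⟨ha, h⟩
  · rintro ⟨ha, h⟩; exact ⟨⟨by omega, ha⟩, h⟩

lemma cond_unique : ∀ (n : ℕ) (x : ℕ → ℝ) (p q : Finset ℕ), p ⊆ range n → q ⊆ range n →
    cond n x p → cond n x q → p = q := by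
  intro n
  induction n with
  | zero =>
    intro x p q hp hq _ _
    rw [range_zero, subset_empty] at hp hq
    rw [hp, hq]
  | succ n IH =>
    intro x p q hp hq hcp hcq
    have hkp : p.card ≤ n + 1 := by simpa using card_le_card hp
    have hkq : q.card ≤ n + 1 := by simpa using card_le_card hq
    have keyp := hcp n (by omega)
    have keyq := hcq n (by omega)
    rw [rk_full hp] at keyp
    rw [rk_full hq] at keyq
    have hIcop : Ico (p.card - p.card) (p.card + (n + 1 - p.card)) = Ico 0 (n+1) := by
      congr 1 <;> omega
    have hIcoq : Ico (q.card - q.card) (q.card + (n + 1 - q.card)) = Ico 0 (n+1) := by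
      congr 1 <;> omega
    rw [hIcop] at keyp
    rw [hIcoq] at keyq
    by_cases hT : (∑ i ∈ Ico 0 (n+1), x i) ≤ 0
    · -- n ∈ p and n ∈ q ; shift
      have hnp : n ∈ p := keyp.mp hT
      have hnq : n ∈ q := keyq.mp hT
      have hkp1 : 1 ≤ p.card := card_pos.mpr ⟨n, hnp⟩
      have hkq1 : 1 ≤ q.card := card_pos.mpr ⟨n, hnq⟩
      have hsub : ∀ (s : Finset ℕ), s ⊆ range (n+1) → n ∈ s → s.erase n ⊆ range n := by
        intro s hs hns a ha
        rw [mem_erase] at ha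
        have := hs ha.2
        simp only [mem_range] at this ⊢
        omega
      have hcond : ∀ (s : Finset ℕ), s ⊆ range (n+1) → n ∈ s → cond (n+1) x s →
          cond n (fun i => x (i+1)) (s.erase n) := by
        intro s hs hns hc j hj
        have hce : (s.erase n).card = s.card - 1 := card_erase_of_mem hns
        have hre : rk (s.erase n) (j+1) = rk s (j+1) := rk_erase_top (by omega)
        have hr_lt : rk s (j+1) < s.card := by
          apply card_lt_card
          refine ⟨filter_subset _ _, fun hcon => ?_⟩
          have := hcon hns
          simp only [mem_filter] at this
          omega
        have hshift : ∑ i ∈ Ico ((s.erase n).card - rk (s.erase n) (j+1))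
            ((s.erase n).card + (j+1 - rk (s.erase n) (j+1))) , (fun i => x (i+1)) i
            = ∑ i ∈ Ico (s.card - rk s (j+1)) (s.card + (j+1 - rk s (j+1))), x i := by
          rw [hce, hre]
          have hmap : Ico (s.card - 1 - rk s (j+1) + 1) (s.card - 1 + (j+1 - rk s (j+1)) + 1)
              = Ico (s.card - rk s (j+1)) (s.card + (j+1 - rk s (j+1))) := by
            congr 1 <;> omega
          rw [← hmap, ← map_add_right_Ico _ _ 1, sum_map]
          rfl
        rw [hshift]
        rw [hc j (by omega)]
        simp only [mem_erase]
        constructor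
        · intro h; exact ⟨by omega, h⟩
        · exact fun h => h.2
      have := IH (fun i => x (i+1)) (p.erase n) (q.erase n)
        (hsub p hp hnp) (hsub q hq hnq)
        (hcond p hp hnp hcp) (hcond q hq hnq hcq)
      have : insert n (p.erase n) = insert n (q.erase n) := by rw [this]
      rwa [insert_erase hnp, insert_erase hnq] at this
    · -- n ∉ p and n ∉ q
      have hnp : n ∉ p := fun h => hT (keyp.mpr h)
      have hnq : n ∉ q := fun h => hT (keyq.mpr h)
      have hsub : ∀ (s : Finset ℕ), s ⊆ range (n+1) → n ∉ s → s ⊆ range n := by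
        intro s hs hns a ha
        have := hs ha
        simp only [mem_range] at this ⊢
        rcases Nat.lt_succ_iff_lt_or_eq.mp this with h | rfl
        · exact h
        · exact absurd ha hns
      exact IH x p q (hsub p hp hnp) (hsub q hq hnq)
        (fun j hj => hcp j (by omega)) (fun j hj => hcq j (by omega))


-- new material

def Fval (n : ℕ) (x : ℕ → ℝ) : ℕ :=
  sSup {i | i ≤ n ∧ psum x i = sInf ((fun j => psum x j) '' Set.Iic n)}

lemma Fval_eq_iff (n : ℕ) (x : ℕ → ℝ) (k : ℕ) :
    Fval n x = k ↔ k ≤ n ∧ (∀ i ≤ n, psum x k ≤ psum x i) ∧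
      (∀ i ≤ n, k < i → psum x k < psum x i) := by
  have hfin : ((fun j => psum x j) '' Set.Iic n).Finite :=
    Set.Finite.image _ (Set.finite_Iic n)
  have hne : ((fun j => psum x j) '' Set.Iic n).Nonempty :=
    ⟨psum x 0, 0, Set.mem_Iic.mpr (Nat.zero_le n), rfl⟩
  set m := sInf ((fun j => psum x j) '' Set.Iic n) with hm
  have hmem : m ∈ (fun j => psum x j) '' Set.Iic n := Set.Nonempty.csInf_mem hne hfin
  have hlb : ∀ i ≤ n, m ≤ psum x i := fun i hi =>
    csInf_le hfin.bddBelow ⟨i, Set.mem_Iic.mpr hi, rfl⟩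
  set S : Set ℕ := {i | i ≤ n ∧ psum x i = m} with hS
  have hSne : S.Nonempty := by
    obtain ⟨j, hj, hjm⟩ := hmem
    exact ⟨j, Set.mem_Iic.mp hj, hjm⟩
  have hbdd : BddAbove S := ⟨n, fun i hi => hi.1⟩
  constructor
  · rintro rfl
    have hks : Fval n x ∈ S := Nat.sSup_mem hSne hbdd
    refine ⟨hks.1, ?_, ?_⟩
    · intro i hi
      rw [hks.2]
      exact hlb i hi
    · intro i hi hlt
      rcases lt_or_eq_of_le (hlb i hi) with h | h
      · rw [hks.2]; exact h
      · exfalso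
        have hiS : i ∈ S := ⟨hi, h.symm⟩
        have hle : i ≤ Fval n x := le_csSup hbdd hiS
        omega
  · rintro ⟨hk, h1, h2⟩
    have hmk : m = psum x k := by
      apply le_antisymm (hlb k hk)
      apply le_csInf hne
      rintro b ⟨j, hj, rfl⟩
      exact h1 j (Set.mem_Iic.mp hj)
    apply IsGreatest.csSup_eq
    constructor
    · exact ⟨hk, hmk.symm⟩
    · intro i hi
      by_contra hc
      have hlt := h2 i hi.1 (by omega)
      have hx : psum x i = m := hi.2
      rw [hx, hmk] at hlt
      exact lt_irrefl _ hlt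

lemma Fval_le (n : ℕ) (x : ℕ → ℝ) : Fval n x ≤ n := by
  have h := Fval_eq_iff n x (Fval n x) |>.mp rfl
  exact h.1

def Nval (n : ℕ) (x : ℕ → ℝ) : ℕ := ∑ i ∈ Icc 1 n, if psum x i ≤ 0 then (1:ℕ) else 0

lemma Nval_eq_card (n : ℕ) (x : ℕ → ℝ) : Nval n x = (patt n x).card := by
  unfold Nval patt
  rw [show (∑ i ∈ Icc 1 n, if psum x i ≤ 0 then (1:ℕ) else 0)
      = #((Icc 1 n).filter (fun i => psum x i ≤ 0)) from (card_filter _ _).symm]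
  symm
  apply card_bij (fun j _ => j + 1)
  · intro a ha
    simp only [mem_filter, mem_range] at ha
    simp only [mem_filter, mem_Icc]
    exact ⟨⟨by omega, by omega⟩, ha.2⟩
  · intro a ha b hb h
    omega
  · intro b hb
    simp only [mem_filter, mem_Icc] at hb
    refine ⟨b - 1, ?_, by omega⟩
    simp only [mem_filter, mem_range]
    constructor
    · omega
    · have : b - 1 + 1 = b := by omega
      rw [this]
      exact hb.2

lemma Nval_le (n : ℕ) (x : ℕ → ℝ) : Nval n x ≤ n := by
  rw [Nval_eq_card]
  simpa using card_le_card (patt_subset n x)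

/-- The key lemma (II): if partial sums of `y` are the sums of `u` over
`tauf`-preimages of initial segments, then the last argmin of `y` is `(patt n u).card`. -/
lemma key_II (n : ℕ) (u : ℕ → ℝ) (y : ℕ → ℝ)
    (hy : ∀ i ≤ n, psum y i = ∑ j ∈ (range n).filter (fun j => tauf n (patt n u) j < i), u j) :
    Fval n y = (patt n u).card := by
  set p := patt n u with hpdef
  set c := (range n) \ p with hcdef
  have hp : p ⊆ range n := patt_subset n u
  set k := p.card with hk
  have hkn : k ≤ n := by simpa using card_le_card hp
  have hcc : c.card = n - k := by rw [hcdef, card_sdiff_of_subset hp, card_range]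
  have hcsub : c ⊆ range n := sdiff_subset
  -- invariants
  have hInv : ∀ J, J ≤ n → (∑ j ∈ p.filter (· < J), u j) ≤ 0 ∧
      ((c.filter (· < J)).Nonempty → 0 < ∑ j ∈ c.filter (· < J), u j) := by
    intro J
    induction J with
    | zero =>
      intro _
      have e1 : p.filter (· < 0) = ∅ := by ext a; simp
      have e2 : c.filter (· < 0) = ∅ := by ext a; simp
      rw [e1, e2]
      simp
    | succ J ih =>
      intro hJ
      obtain ⟨ihA, ihC⟩ := ih (by omega)
      have hJn : J < n := hJ
      have hdisj : Disjoint (p.filter (· < J+1)) (c.filter (· < J+1)) :=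
        disjoint_filter_filter disjoint_sdiff
      have hsplit : psum u (J+1)
          = (∑ j ∈ p.filter (· < J+1), u j) + (∑ j ∈ c.filter (· < J+1), u j) := by
        unfold psum
        rw [← sum_union hdisj]
        congr 1
        ext a
        simp only [mem_union, mem_filter, hcdef, mem_sdiff, mem_range]
        constructor
        · intro ha
          by_cases hap : a ∈ p
          · exact Or.inl ⟨hap, by omega⟩
          · exact Or.inr ⟨⟨by omega, hap⟩, by omega⟩
        · rintro (⟨_, h⟩ | ⟨⟨_, _⟩, h⟩) <;> omega
      by_cases hJp : J ∈ p
      · have hcfilt : c.filter (· < J+1) = c.filter (· < J) := by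
          apply filter_congr
          intro a ha
          rw [hcdef, mem_sdiff] at ha
          have : a ≠ J := fun h => ha.2 (h ▸ hJp)
          constructor <;> omega
        have hple : psum u (J+1) ≤ 0 := by
          have := hJp
          rw [hpdef] at this
          simp only [patt, mem_filter] at this
          exact this.2
        have hCge : 0 ≤ ∑ j ∈ c.filter (· < J), u j := by
          by_cases hne : (c.filter (· < J)).Nonempty
          · exact le_of_lt (ihC hne)
          · rw [not_nonempty_iff_eq_empty.mp hne, sum_empty]
        constructor
        · rw [hcfilt] at hsplit
          linarith
        · rw [hcfilt]
          exact ihC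
      · have hpfilt : p.filter (· < J+1) = p.filter (· < J) := by
          apply filter_congr
          intro a ha
          have : a ≠ J := fun h => hJp (h ▸ ha)
          constructor <;> omega
        have hpos : 0 < psum u (J+1) := by
          by_contra hcon
          push_neg at hcon
          have : J ∈ patt n u := by
            simp only [patt, mem_filter, mem_range]
            exact ⟨hJn, hcon⟩
          exact hJp this
        constructor
        · rw [hpfilt]
          exact ihA
        · intro _
          rw [hpfilt] at hsplit
          linarith
  have hA : ∀ r ≤ k, (∑ j ∈ p.filter (fun j => rk p j < r), u j) ≤ 0 := by
    intro r hr
    obtain ⟨J, hJ, hEq⟩ := rk_cutoff hp hr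
    rw [hEq]
    exact (hInv J hJ).1
  have hC : ∀ r, 1 ≤ r → r ≤ c.card → 0 < ∑ j ∈ c.filter (fun j => rk c j < r), u j := by
    intro r h1 h2
    obtain ⟨J, hJ, hEq⟩ := rk_cutoff hcsub h2
    have hne : (c.filter (· < J)).Nonempty := by
      rw [← hEq]
      obtain ⟨j0, hj0c, hj0⟩ := exists_rk_eq (show 0 < c.card by omega)
      exact ⟨j0, mem_filter.mpr ⟨hj0c, by omega⟩⟩
    rw [hEq]
    exact (hInv J hJ).2 hne
  -- the filtered sets
  have hDlow : ∀ i ≤ k, (range n).filter (fun j => tauf n p j < i)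
      = p \ (p.filter (fun j => rk p j < k - i)) := by
    intro i hi
    ext j
    constructor
    · intro hj
      rw [mem_filter, mem_range] at hj
      obtain ⟨hjn, htau⟩ := hj
      by_cases hjp : j ∈ p
      · rw [mem_sdiff, mem_filter]
        have hrk : rk p j < k := rk_lt_card hjp
        rw [tauf, if_pos hjp] at htau
        push_neg
        exact ⟨hjp, fun _ => by omega⟩
      · exfalso
        rw [tauf, if_neg hjp, if_pos hjn] at htau
        omega
    · intro hj
      rw [mem_sdiff, mem_filter] at hj
      obtain ⟨hjp, hcon⟩ := hj
      have hjn : j < n := by have := hp hjp; simpa using this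
      have hrk : rk p j < k := rk_lt_card hjp
      have hnot : ¬ (rk p j < k - i) := fun hc => hcon ⟨hjp, hc⟩
      rw [mem_filter, mem_range]
      refine ⟨hjn, ?_⟩
      rw [tauf, if_pos hjp]
      omega
  have hDhigh : ∀ i, k ≤ i → i ≤ n → (range n).filter (fun j => tauf n p j < i)
      = p ∪ c.filter (fun j => rk c j < i - k) := by
    intro i hik hin
    ext j
    constructor
    · intro hj
      rw [mem_filter, mem_range] at hj
      obtain ⟨hjn, htau⟩ := hj
      by_cases hjp : j ∈ p
      · exact mem_union_left _ hjp
      · apply mem_union_right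
        rw [tauf, if_neg hjp, if_pos hjn] at htau
        rw [mem_filter]
        refine ⟨?_, ?_⟩
        · rw [hcdef, mem_sdiff]
          exact ⟨mem_range.mpr hjn, hjp⟩
        · rw [hcdef]
          omega
    · intro hj
      rw [mem_union, mem_filter] at hj
      rcases hj with hjp | ⟨hjc, hrk⟩
      · have hjn : j < n := by have := hp hjp; simpa using this
        have hrk : rk p j < k := rk_lt_card hjp
        rw [mem_filter, mem_range]
        refine ⟨hjn, ?_⟩
        rw [tauf, if_pos hjp]
        omega
      · have hjc' := hjc
        rw [hcdef, mem_sdiff] at hjc'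
        obtain ⟨hjr, hjp⟩ := hjc'
        have hjn : j < n := mem_range.mp hjr
        rw [mem_filter, mem_range]
        refine ⟨hjn, ?_⟩
        rw [tauf, if_neg hjp, if_pos hjn]
        rw [hcdef] at hrk
        omega
  -- value at k
  have hyk : psum y k = ∑ j ∈ p, u j := by
    rw [hy k hkn, hDlow k le_rfl]
    have : p.filter (fun j => rk p j < k - k) = ∅ := by
      ext a
      simp only [mem_filter, notMem_empty, iff_false]
      rintro ⟨-, h⟩
      omega
    rw [this, sdiff_empty]
  have key1 : ∀ i ≤ n, psum y k ≤ psum y i := by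
    intro i hin
    rcases le_or_gt i k with hik | hik
    · rw [hy i (by omega), hDlow i hik, sum_sdiff_eq_sub (filter_subset _ _), hyk]
      have := hA (k - i) (by omega)
      linarith
    · rw [hy i hin, hDhigh i (by omega) hin, sum_union, hyk]
      · have := hC (i - k) (by omega) (by omega)
        linarith
      · exact disjoint_sdiff.mono_right (filter_subset _ _)
  have key2 : ∀ i ≤ n, k < i → psum y k < psum y i := by
    intro i hin hik
    rw [hy i hin, hDhigh i (by omega) hin, sum_union (disjoint_sdiff.mono_right (filter_subset _ _)), hyk]
    have := hC (i - k) (by omega) (by omega)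
    linarith
  exact (Fval_eq_iff n y k).mpr ⟨hkn, key1, key2⟩

-- new material

def tpermFin (n : ℕ) (p : Finset ℕ) (hp : p ⊆ range n) : Equiv.Perm (Fin n) :=
  Equiv.ofBijective (fun j => ⟨tauf n p j.1, tauf_lt hp j.2⟩)
    (Finite.injective_iff_bijective.mp (fun a b h => by
      apply Fin.ext
      exact tauf_injOn hp a.2 b.2 (congrArg Fin.val h)))

def emb (n : ℕ) : Equiv.Perm (Fin n) →* Equiv.Perm ℕ :=
  Equiv.Perm.extendDomainHom Fin.equivSubtype

lemma emb_apply_ge (n : ℕ) (σ : Equiv.Perm (Fin n)) {i : ℕ} (h : n ≤ i) :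
    emb n σ i = i := by
  apply Equiv.Perm.extendDomain_apply_not_subtype
  omega

lemma emb_apply_lt (n : ℕ) (σ : Equiv.Perm (Fin n)) {i : ℕ} (h : i < n) :
    emb n σ i = (σ ⟨i, h⟩).1 := by
  have := Equiv.Perm.extendDomain_apply_subtype σ (Fin.equivSubtype) (show i < n from h)
  show (σ.extendDomain Fin.equivSubtype) i = _
  simpa [Fin.equivSubtype] using this

lemma emb_tperm (n : ℕ) (p : Finset ℕ) (hp : p ⊆ range n) (m : ℕ) :
    emb n (tpermFin n p hp) m = tauf n p m := by
  rcases lt_or_ge m n with h | h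
  · rw [emb_apply_lt n _ h]
    rfl
  · rw [emb_apply_ge n _ h, tauf_id hp h]

lemma psum_comp_inv {n : ℕ} {p : Finset ℕ} (hp : p ⊆ range n) (σ : Equiv.Perm ℕ)
    (hσ : ∀ m, σ m = tauf n p m) (u : ℕ → ℝ) {i : ℕ} (hi : i ≤ n) :
    psum (fun m => u (σ⁻¹ m)) i
      = ∑ j ∈ (range n).filter (fun j => tauf n p j < i), u j := by
  unfold psum
  have himg : (range i).image (fun m => σ⁻¹ m) = (range n).filter (fun j => tauf n p j < i) := by
    ext j
    simp only [mem_image, mem_filter, mem_range]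
    constructor
    · rintro ⟨m, hm, rfl⟩
      have hback : σ (σ⁻¹ m) = m := Equiv.apply_symm_apply σ m
      have htj : tauf n p (σ⁻¹ m) = m := by rw [← hσ, hback]
      have hjn : σ⁻¹ m < n := by
        by_contra hcon
        push_neg at hcon
        rw [tauf_id hp hcon] at htj
        omega
      exact ⟨hjn, by omega⟩
    · rintro ⟨hjn, htau⟩
      refine ⟨tauf n p j, by omega, ?_⟩
      rw [← hσ]; exact σ.symm_apply_apply j
  rw [← himg, sum_image]
  intro a _ b _ h
  exact σ⁻¹.injective h

def pcomp (n : ℕ) (w : ℕ → ℝ) (σ : Equiv.Perm (Fin n)) : ℕ → ℝ := fun i => w (emb n σ i)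

def Phi (n : ℕ) (w : ℕ → ℝ) (σ : Equiv.Perm (Fin n)) : Equiv.Perm (Fin n) :=
  σ * (tpermFin n (patt n (pcomp n w σ)) (patt_subset n _))⁻¹

lemma hval (n : ℕ) (w : ℕ → ℝ) (σ : Equiv.Perm (Fin n)) :
    Fval n (pcomp n w (Phi n w σ)) = Nval n (pcomp n w σ) := by
  have h0 : emb n (Phi n w σ)
      = emb n σ * (emb n (tpermFin n (patt n (pcomp n w σ)) (patt_subset n _)))⁻¹ := by
    unfold Phi
    rw [map_mul, map_inv]
  have hfun : pcomp n w (Phi n w σ)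
      = fun m => pcomp n w σ
          ((emb n (tpermFin n (patt n (pcomp n w σ)) (patt_subset n _)))⁻¹ m) := by
    funext m
    show w (emb n (Phi n w σ) m) = _
    rw [h0, Equiv.Perm.mul_apply]
    rfl
  rw [hfun, Nval_eq_card]
  exact key_II n (pcomp n w σ) _
    (fun i hi => psum_comp_inv (patt_subset n _) _ (emb_tperm n _ _) _ hi)

lemma Phi_inj (n : ℕ) (w : ℕ → ℝ) : Function.Injective (Phi n w) := by
  intro σ1 σ2 h
  have h1 : σ1 = Phi n w σ1 * tpermFin n (patt n (pcomp n w σ1)) (patt_subset n _) :=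
    (inv_mul_cancel_right σ1 _).symm
  have h2 : σ2 = Phi n w σ2 * tpermFin n (patt n (pcomp n w σ2)) (patt_subset n _) :=
    (inv_mul_cancel_right σ2 _).symm
  have hx : ∀ σ : Equiv.Perm (Fin n),
      σ = Phi n w σ1 * tpermFin n (patt n (pcomp n w σ)) (patt_subset n _) →
      cond n (pcomp n w (Phi n w σ1)) (patt n (pcomp n w σ)) := by
    intro σ hh
    rw [← patt_comp_iff_cond (patt_subset n (pcomp n w σ))]
    have hσfun : pcomp n w σ
        = fun m => pcomp n w (Phi n w σ1) (tauf n (patt n (pcomp n w σ)) m) := by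
      funext m
      show w (emb n σ m) = w (emb n (Phi n w σ1) (tauf n (patt n (pcomp n w σ)) m))
      have he : emb n σ m = emb n (Phi n w σ1) (tauf n (patt n (pcomp n w σ)) m) := by
        conv_lhs => rw [hh]
        rw [map_mul, Equiv.Perm.mul_apply, emb_tperm]
      rw [he]
    conv_rhs => rw [hσfun]
  have hc1 := hx σ1 h1
  have hc2 := hx σ2 (by rw [h]; exact h2)
  have hPeq := cond_unique n _ _ _ (patt_subset n (pcomp n w σ1))
    (patt_subset n (pcomp n w σ2)) hc1 hc2
  have ht : tpermFin n (patt n (pcomp n w σ1)) (patt_subset n _)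
      = tpermFin n (patt n (pcomp n w σ2)) (patt_subset n _) := by
    congr 1
  calc σ1 = Phi n w σ1 * tpermFin n (patt n (pcomp n w σ1)) (patt_subset n _) := h1
  _ = Phi n w σ2 * tpermFin n (patt n (pcomp n w σ2)) (patt_subset n _) := by rw [h, ht]
  _ = σ2 := h2.symm

lemma star (n : ℕ) (w : ℕ → ℝ) (k : ℕ) :
    ((univ : Finset (Equiv.Perm (Fin n))).filter
        (fun σ => Nval n (pcomp n w σ) = k)).card =
    ((univ : Finset (Equiv.Perm (Fin n))).filter
        (fun σ => Fval n (pcomp n w σ) = k)).card := by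
  classical
  have hcard : ∀ k' : ℕ,
      ((univ : Finset (Equiv.Perm (Fin n))).filter
        (fun σ => Nval n (pcomp n w σ) = k')).card ≤
      ((univ : Finset (Equiv.Perm (Fin n))).filter
        (fun σ => Fval n (pcomp n w σ) = k')).card := by
    intro k'
    apply card_le_card_of_injOn (Phi n w)
    · intro σ hσ
      simp only [mem_coe, mem_filter, mem_univ, true_and] at hσ ⊢
      rw [hval n w σ, hσ]
    · exact fun a _ b _ hh => Phi_inj n w hh
  have hsumN : ∑ k' ∈ range (n+1),
      ((univ : Finset (Equiv.Perm (Fin n))).filter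
        (fun σ => Nval n (pcomp n w σ) = k')).card
      = (univ : Finset (Equiv.Perm (Fin n))).card :=
    (card_eq_sum_card_fiberwise (fun σ _ => mem_range.mpr
      (Nat.lt_succ_of_le (Nval_le n _)))).symm
  have hsumF : ∑ k' ∈ range (n+1),
      ((univ : Finset (Equiv.Perm (Fin n))).filter
        (fun σ => Fval n (pcomp n w σ) = k')).card
      = (univ : Finset (Equiv.Perm (Fin n))).card :=
    (card_eq_sum_card_fiberwise (fun σ _ => mem_range.mpr
      (Nat.lt_succ_of_le (Fval_le n _)))).symm
  rcases le_or_gt k n with hk | hk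
  · by_contra hne
    have hlt := lt_of_le_of_ne (hcard k) hne
    have : ∑ k' ∈ range (n+1),
        ((univ : Finset (Equiv.Perm (Fin n))).filter
          (fun σ => Nval n (pcomp n w σ) = k')).card <
        ∑ k' ∈ range (n+1),
        ((univ : Finset (Equiv.Perm (Fin n))).filter
          (fun σ => Fval n (pcomp n w σ) = k')).card :=
      sum_lt_sum (fun i _ => hcard i) ⟨k, mem_range.mpr (by omega), hlt⟩
    omega
  · have e1 : ((univ : Finset (Equiv.Perm (Fin n))).filter
        (fun σ => Nval n (pcomp n w σ) = k)) = ∅ := by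
      apply filter_false_of_mem
      intro σ _
      have := Nval_le n (pcomp n w σ)
      omega
    have e2 : ((univ : Finset (Equiv.Perm (Fin n))).filter
        (fun σ => Fval n (pcomp n w σ) = k)) = ∅ := by
      apply filter_false_of_mem
      intro σ _
      have := Fval_le n (pcomp n w σ)
      omega
    rw [e1, e2]


-- new material

lemma measurable_psum (i : ℕ) : Measurable (fun x : ℕ → ℝ => psum x i) :=
  Finset.measurable_sum _ (fun j _ => measurable_pi_apply j)

lemma measurable_Nval (n : ℕ) : Measurable (Nval n) := by
  unfold Nval
  apply Finset.measurable_sum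
  intro i _
  exact Measurable.ite (measurableSet_le (measurable_psum i) measurable_const)
    measurable_const measurable_const

lemma measurable_Fval (n : ℕ) : Measurable (Fval n) := by
  apply measurable_to_countable'
  intro k
  have hset : (Fval n) ⁻¹' {k} = {x | k ≤ n} ∩
      ((⋂ i ∈ Set.Iic n, {x | psum x k ≤ psum x i}) ∩
       (⋂ i ∈ Set.Iic n, {x | k < i → psum x k < psum x i})) := by
    ext x
    simp only [Set.mem_preimage, Set.mem_singleton_iff, Fval_eq_iff, Set.mem_inter_iff,
      Set.mem_iInter, Set.mem_setOf_eq, Set.mem_Iic]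
    all_goals tauto
  rw [hset]
  refine MeasurableSet.inter ?_ (MeasurableSet.inter ?_ ?_)
  · by_cases h : k ≤ n
    · have : {x : ℕ → ℝ | k ≤ n} = Set.univ := by ext; simp [h]
      rw [this]; exact MeasurableSet.univ
    · have : {x : ℕ → ℝ | k ≤ n} = ∅ := by ext; simp [h]
      rw [this]; exact MeasurableSet.empty
  · exact MeasurableSet.biInter (Set.to_countable _)
      (fun i _ => measurableSet_le (measurable_psum k) (measurable_psum i))
  · refine MeasurableSet.biInter (Set.to_countable _) (fun i _ => ?_)
    by_cases h : k < i
    · have : {x : ℕ → ℝ | k < i → psum x k < psum x i} = {x | psum x k < psum x i} := by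
        ext; simp [h]
      rw [this]; exact measurableSet_lt (measurable_psum k) (measurable_psum i)
    · have : {x : ℕ → ℝ | k < i → psum x k < psum x i} = Set.univ := by
        ext; simp [h]
      rw [this]; exact MeasurableSet.univ


end

end SA

open MeasureTheory ProbabilityTheory Finset

/-- Sparre-Andersen identity for exchangeable increments: the number of nonpositive
partial sums equals in law the last time of the minimum of the walk. -/
theorem stmt_6 {Ω : Type*} [MeasurableSpace Ω] (μ : Measure Ω) [IsProbabilityMeasure μ]
    (n : ℕ) (ζ : ℕ → Ω → ℝ)
    (hmeas : ∀ i, Measurable (ζ i))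
    (hexch : ∀ π : Equiv.Perm ℕ, (∀ i, n ≤ i → π i = i) →
      μ.map (fun ω => fun i : ℕ => ζ (π i) ω) = μ.map (fun ω => fun i : ℕ => ζ i ω))
    (S : ℕ → Ω → ℝ) (hS : ∀ i ω, S i ω = ∑ j ∈ Finset.range i, ζ j ω)
    (Nminus F : Ω → ℕ)
    (hNminus : ∀ ω, Nminus ω = ∑ i ∈ Finset.Icc 1 n, if S i ω ≤ 0 then 1 else 0)
    (hF : ∀ ω, F ω = sSup {i | i ≤ n ∧ S i ω = sInf ((fun j => S j ω) '' Set.Iic n)}) :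
    μ.map Nminus = μ.map F := by
  classical
  set X : Ω → (ℕ → ℝ) := fun ω => fun i => ζ i ω with hX
  have hXm : Measurable X := measurable_pi_lambda _ (fun i => hmeas i)
  have hSX : ∀ i ω, S i ω = SA.psum (X ω) i := by
    intro i ω
    rw [hS]
    rfl
  have hNX : ∀ ω, Nminus ω = SA.Nval n (X ω) := by
    intro ω
    rw [hNminus]
    unfold SA.Nval
    exact Finset.sum_congr rfl (fun i _ => by rw [hSX])
  have hFX : ∀ ω, F ω = SA.Fval n (X ω) := by
    intro ω
    rw [hF]
    unfold SA.Fval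
    have hfe : (fun j => S j ω) = fun j => SA.psum (X ω) j := funext (fun j => hSX j ω)
    congr 1
    ext i
    simp only [Set.mem_setOf_eq]
    rw [hSX i ω, hfe]
  have hNm : Measurable Nminus := by
    have : Nminus = fun ω => SA.Nval n (X ω) := funext hNX
    rw [this]
    exact (SA.measurable_Nval n).comp hXm
  have hFm : Measurable F := by
    have : F = fun ω => SA.Fval n (X ω) := funext hFX
    rw [this]
    exact (SA.measurable_Fval n).comp hXm
  -- the key singleton identity
  have key : ∀ k : ℕ, μ (Nminus ⁻¹' {k}) = μ (F ⁻¹' {k}) := by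
    intro k
    have hNset : MeasurableSet {x : ℕ → ℝ | SA.Nval n x = k} :=
      SA.measurable_Nval n (measurableSet_singleton k)
    have hFset : MeasurableSet {x : ℕ → ℝ | SA.Fval n x = k} :=
      SA.measurable_Fval n (measurableSet_singleton k)
    have hmσ : ∀ σ : Equiv.Perm (Fin n), Measurable (fun ω => fun i : ℕ => ζ (SA.emb n σ i) ω) :=
      fun σ => measurable_pi_lambda _ (fun i => hmeas _)
    have hNpre : X ⁻¹' {x | SA.Nval n x = k} = Nminus ⁻¹' {k} := by
      ext ω
      simp only [Set.mem_preimage, Set.mem_setOf_eq, Set.mem_singleton_iff]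
      rw [hNX]
    have hFpre : X ⁻¹' {x | SA.Fval n x = k} = F ⁻¹' {k} := by
      ext ω
      simp only [Set.mem_preimage, Set.mem_setOf_eq, Set.mem_singleton_iff]
      rw [hFX]
    have hswapN : ∀ σ : Equiv.Perm (Fin n),
        μ ((fun ω => fun i : ℕ => ζ (SA.emb n σ i) ω) ⁻¹' {x | SA.Nval n x = k})
          = μ (Nminus ⁻¹' {k}) := by
      intro σ
      have hmap := hexch (SA.emb n σ) (fun i hi => SA.emb_apply_ge n σ hi)
      calc μ ((fun ω => fun i : ℕ => ζ (SA.emb n σ i) ω) ⁻¹' {x | SA.Nval n x = k})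
          = μ.map (fun ω => fun i : ℕ => ζ (SA.emb n σ i) ω) {x | SA.Nval n x = k} :=
            (Measure.map_apply (hmσ σ) hNset).symm
        _ = μ.map (fun ω => fun i : ℕ => ζ i ω) {x | SA.Nval n x = k} := by rw [hmap]
        _ = μ (X ⁻¹' {x | SA.Nval n x = k}) := Measure.map_apply hXm hNset
        _ = μ (Nminus ⁻¹' {k}) := by rw [hNpre]
    have hswapF : ∀ σ : Equiv.Perm (Fin n),
        μ ((fun ω => fun i : ℕ => ζ (SA.emb n σ i) ω) ⁻¹' {x | SA.Fval n x = k})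
          = μ (F ⁻¹' {k}) := by
      intro σ
      have hmap := hexch (SA.emb n σ) (fun i hi => SA.emb_apply_ge n σ hi)
      calc μ ((fun ω => fun i : ℕ => ζ (SA.emb n σ i) ω) ⁻¹' {x | SA.Fval n x = k})
          = μ.map (fun ω => fun i : ℕ => ζ (SA.emb n σ i) ω) {x | SA.Fval n x = k} :=
            (Measure.map_apply (hmσ σ) hFset).symm
        _ = μ.map (fun ω => fun i : ℕ => ζ i ω) {x | SA.Fval n x = k} := by rw [hmap]
        _ = μ (X ⁻¹' {x | SA.Fval n x = k}) := Measure.map_apply hXm hFset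
        _ = μ (F ⁻¹' {k}) := by rw [hFpre]
    -- sum over σ of indicators, pointwise equal by star
    have hptN : ∀ ω, ∑ σ : Equiv.Perm (Fin n),
        Set.indicator ((fun ω => fun i : ℕ => ζ (SA.emb n σ i) ω) ⁻¹' {x | SA.Nval n x = k})
          (1 : Ω → ENNReal) ω
        = (((univ : Finset (Equiv.Perm (Fin n))).filter
            (fun σ => SA.Nval n (SA.pcomp n (X ω) σ) = k)).card : ENNReal) := by
      intro ω
      rw [card_filter]
      push_cast
      apply Finset.sum_congr rfl
      intro σ _
      rw [Set.indicator_apply]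
      simp only [Set.mem_preimage, Set.mem_setOf_eq, Pi.one_apply]
      have : (fun i : ℕ => ζ (SA.emb n σ i) ω) = SA.pcomp n (X ω) σ := rfl
      rw [this]
    have hptF : ∀ ω, ∑ σ : Equiv.Perm (Fin n),
        Set.indicator ((fun ω => fun i : ℕ => ζ (SA.emb n σ i) ω) ⁻¹' {x | SA.Fval n x = k})
          (1 : Ω → ENNReal) ω
        = (((univ : Finset (Equiv.Perm (Fin n))).filter
            (fun σ => SA.Fval n (SA.pcomp n (X ω) σ) = k)).card : ENNReal) := by
      intro ω
      rw [card_filter]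
      push_cast
      apply Finset.sum_congr rfl
      intro σ _
      rw [Set.indicator_apply]
      simp only [Set.mem_preimage, Set.mem_setOf_eq, Pi.one_apply]
      have : (fun i : ℕ => ζ (SA.emb n σ i) ω) = SA.pcomp n (X ω) σ := rfl
      rw [this]
    have hsum : ∑ σ : Equiv.Perm (Fin n),
        μ ((fun ω => fun i : ℕ => ζ (SA.emb n σ i) ω) ⁻¹' {x | SA.Nval n x = k})
        = ∑ σ : Equiv.Perm (Fin n),
        μ ((fun ω => fun i : ℕ => ζ (SA.emb n σ i) ω) ⁻¹' {x | SA.Fval n x = k}) := by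
      have hmN : ∀ σ : Equiv.Perm (Fin n), MeasurableSet
          ((fun ω => fun i : ℕ => ζ (SA.emb n σ i) ω) ⁻¹' {x | SA.Nval n x = k}) :=
        fun σ => (hmσ σ) hNset
      have hmF : ∀ σ : Equiv.Perm (Fin n), MeasurableSet
          ((fun ω => fun i : ℕ => ζ (SA.emb n σ i) ω) ⁻¹' {x | SA.Fval n x = k}) :=
        fun σ => (hmσ σ) hFset
      calc ∑ σ : Equiv.Perm (Fin n),
          μ ((fun ω => fun i : ℕ => ζ (SA.emb n σ i) ω) ⁻¹' {x | SA.Nval n x = k})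
          = ∑ σ : Equiv.Perm (Fin n), ∫⁻ ω, Set.indicator
              ((fun ω => fun i : ℕ => ζ (SA.emb n σ i) ω) ⁻¹' {x | SA.Nval n x = k})
              (1 : Ω → ENNReal) ω ∂μ := by
            apply Finset.sum_congr rfl
            intro σ _
            rw [lintegral_indicator_one (hmN σ)]
        _ = ∫⁻ ω, ∑ σ : Equiv.Perm (Fin n), Set.indicator
              ((fun ω => fun i : ℕ => ζ (SA.emb n σ i) ω) ⁻¹' {x | SA.Nval n x = k})
              (1 : Ω → ENNReal) ω ∂μ := by
            rw [lintegral_finset_sum]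
            intro σ _
            exact (measurable_const.indicator (hmN σ))
        _ = ∫⁻ ω, ∑ σ : Equiv.Perm (Fin n), Set.indicator
              ((fun ω => fun i : ℕ => ζ (SA.emb n σ i) ω) ⁻¹' {x | SA.Fval n x = k})
              (1 : Ω → ENNReal) ω ∂μ := by
            congr 1
            funext ω
            rw [hptN ω, hptF ω, SA.star n (X ω) k]
        _ = ∑ σ : Equiv.Perm (Fin n), ∫⁻ ω, Set.indicator
              ((fun ω => fun i : ℕ => ζ (SA.emb n σ i) ω) ⁻¹' {x | SA.Fval n x = k})
              (1 : Ω → ENNReal) ω ∂μ := by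
            rw [lintegral_finset_sum]
            intro σ _
            exact (measurable_const.indicator (hmF σ))
        _ = ∑ σ : Equiv.Perm (Fin n),
            μ ((fun ω => fun i : ℕ => ζ (SA.emb n σ i) ω) ⁻¹' {x | SA.Fval n x = k}) := by
            apply Finset.sum_congr rfl
            intro σ _
            rw [lintegral_indicator_one (hmF σ)]
    rw [Finset.sum_congr rfl (fun σ _ => hswapN σ), Finset.sum_congr rfl (fun σ _ => hswapF σ),
      sum_const, sum_const] at hsum
    have h0 : (univ : Finset (Equiv.Perm (Fin n))).card ≠ 0 :=
      Finset.card_ne_zero_of_mem (mem_univ (1 : Equiv.Perm (Fin n)))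
    have hcard : ((univ : Finset (Equiv.Perm (Fin n))).card : ENNReal) ≠ 0 :=
      Nat.cast_ne_zero.mpr h0
    have hcardtop : ((univ : Finset (Equiv.Perm (Fin n))).card : ENNReal) ≠ ⊤ :=
      ENNReal.natCast_ne_top _
    have := hsum
    rw [nsmul_eq_mul, nsmul_eq_mul] at this
    exact (ENNReal.mul_right_strictMono hcard hcardtop).injective this
  -- conclude
  apply Measure.ext
  intro s hs
  rw [Measure.map_apply hNm hs, Measure.map_apply hFm hs]
  have hNdec : Nminus ⁻¹' s = ⋃ k ∈ (range (n+1)).filter (fun k => k ∈ s), Nminus ⁻¹' {k} := by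
    ext ω
    simp only [Set.mem_preimage, Set.mem_iUnion, mem_filter, mem_range, Set.mem_singleton_iff]
    constructor
    · intro h
      refine ⟨Nminus ω, ⟨?_, h⟩, rfl⟩
      have := SA.Nval_le n (X ω)
      rw [hNX ω]
      omega
    · rintro ⟨kk, ⟨-, hk⟩, rfl⟩
      exact hk
  have hFdec : F ⁻¹' s = ⋃ k ∈ (range (n+1)).filter (fun k => k ∈ s), F ⁻¹' {k} := by
    ext ω
    simp only [Set.mem_preimage, Set.mem_iUnion, mem_filter, mem_range, Set.mem_singleton_iff]
    constructor
    · intro h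
      refine ⟨F ω, ⟨?_, h⟩, rfl⟩
      have := SA.Fval_le n (X ω)
      rw [hFX ω]
      omega
    · rintro ⟨kk, ⟨-, hk⟩, rfl⟩
      exact hk
  rw [hNdec, hFdec, measure_biUnion_finset ?_ (fun k _ => hNm (measurableSet_singleton k)),
    measure_biUnion_finset ?_ (fun k _ => hFm (measurableSet_singleton k))]
  · exact Finset.sum_congr rfl (fun k _ => key k)
  · intro a _ b _ hab
    apply Set.disjoint_left.mpr
    intro ω ha hb
    simp only [Set.mem_preimage, Set.mem_singleton_iff] at ha hb
    exact hab (ha ▸ hb ▸ rfl)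
  · intro a _ b _ hab
    apply Set.disjoint_left.mpr
    intro ω ha hb
    simp only [Set.mem_preimage, Set.mem_singleton_iff] at ha hb
    exact hab (ha ▸ hb ▸ rfl)
end
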